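/- arXiv:math/0511191 — 6 statements merged into one kernel-verified Lean document; each statement's English description precedes it below -/
import Mathlib

section
/- For positive integers a, m, n with a·m ≤ n, the group GL_n(ℤ) has a subgroup of order (m+1)!^a · a!. -/
namespace GLnZAux

open LinearMap

/-! ### The standard (sum-zero) representation of `Perm (Fin (m+1))` on `ℤ^m` -/

/-- Embed `ℤ^m` into `ℤ^(m+1)` as the sum-zero sublattice: coordinate `0` is minus the
sum of the others. -/
noncomputable def Smap (m : ℕ) : (Fin m → ℤ) →ₗ[ℤ] (Fin (m + 1) → ℤ) :=
  LinearMap.pi fun k =>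
    Fin.cases (-(∑ j : Fin m, LinearMap.proj (R := ℤ) (φ := fun _ => ℤ) j))
      (fun j => LinearMap.proj j) k

@[simp] lemma Smap_apply_zero {m : ℕ} (x : Fin m → ℤ) :
    Smap m x 0 = -(∑ j, x j) := by
  simp [Smap, LinearMap.pi_apply]

@[simp] lemma Smap_apply_succ {m : ℕ} (x : Fin m → ℤ) (j : Fin m) :
    Smap m x j.succ = x j := by
  simp [Smap, LinearMap.pi_apply]

/-- Projection `ℤ^(m+1) → ℤ^m` forgetting coordinate `0`. -/
noncomputable def Tmap (m : ℕ) : (Fin (m + 1) → ℤ) →ₗ[ℤ] (Fin m → ℤ) :=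
  LinearMap.funLeft ℤ ℤ Fin.succ

@[simp] lemma Tmap_apply {m : ℕ} (y : Fin (m + 1) → ℤ) (j : Fin m) :
    Tmap m y j = y j.succ := rfl

/-- Coordinate-permutation action of `Perm (Fin (m+1))` on `ℤ^(m+1)`. -/
noncomputable def Pmap {m : ℕ} (τ : Equiv.Perm (Fin (m + 1))) :
    (Fin (m + 1) → ℤ) →ₗ[ℤ] (Fin (m + 1) → ℤ) :=
  LinearMap.funLeft ℤ ℤ ⇑τ⁻¹

@[simp] lemma Pmap_apply {m : ℕ} (τ : Equiv.Perm (Fin (m + 1))) (y : Fin (m + 1) → ℤ)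
    (k : Fin (m + 1)) : Pmap τ y k = y (τ⁻¹ k) := rfl

lemma sum_Smap {m : ℕ} (x : Fin m → ℤ) : ∑ k, Smap m x k = 0 := by
  rw [Fin.sum_univ_succ]
  simp

lemma sum_Pmap {m : ℕ} (τ : Equiv.Perm (Fin (m + 1))) (y : Fin (m + 1) → ℤ) :
    ∑ k, Pmap τ y k = ∑ k, y k := by
  simpa using Equiv.sum_comp (τ⁻¹ : Equiv.Perm (Fin (m + 1))) y

lemma Smap_Tmap {m : ℕ} (y : Fin (m + 1) → ℤ) (hy : ∑ k, y k = 0) :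
    Smap m (Tmap m y) = y := by
  funext k
  induction k using Fin.cases with
  | zero =>
      rw [Fin.sum_univ_succ] at hy
      simp only [Smap_apply_zero, Tmap_apply]
      omega
  | succ j => simp

/-- The standard representation of `Perm (Fin (m+1))` by endomorphisms of `ℤ^m`. -/
noncomputable def rhoB (m : ℕ) : Equiv.Perm (Fin (m + 1)) →* Module.End ℤ (Fin m → ℤ) where
  toFun τ := Tmap m ∘ₗ Pmap τ ∘ₗ Smap m
  map_one' := by
    ext x j
    simp
  map_mul' τ₁ τ₂ := by
    refine LinearMap.ext fun x => funext fun j => ?_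
    have hz : Smap m (Tmap m (Pmap τ₂ (Smap m x))) = Pmap τ₂ (Smap m x) :=
      Smap_Tmap _ (by rw [sum_Pmap]; exact sum_Smap x)
    simp only [Module.End.mul_apply, LinearMap.comp_apply, hz]
    simp [mul_inv_rev, Equiv.Perm.mul_apply]

lemma rhoB_apply {m : ℕ} (τ : Equiv.Perm (Fin (m + 1))) (x : Fin m → ℤ) (j : Fin m) :
    rhoB m τ x j = Smap m x (τ⁻¹ j.succ) := rfl

lemma rhoB_injective {m : ℕ} (hm : 0 < m) : Function.Injective (rhoB m) := by
  rw [injective_iff_map_eq_one]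
  intro τ hτ
  have key : ∀ (x : Fin m → ℤ) k, Smap m x (τ⁻¹ k) = Smap m x k := by
    intro x k
    have h1 : ∀ z : Fin m → ℤ, Tmap m (Pmap τ (Smap m z)) = z := by
      intro z
      have := DFunLike.congr_fun hτ z
      exact (by simpa [Module.End.one_apply] using this : rhoB m τ z = z)
    have h2 : Pmap τ (Smap m x) = Smap m x := by
      calc Pmap τ (Smap m x)
          = Smap m (Tmap m (Pmap τ (Smap m x))) :=
            (Smap_Tmap _ (by rw [sum_Pmap]; exact sum_Smap x)).symm
        _ = Smap m x := by rw [h1]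
    exact congrFun h2 k
  have hfix : ∀ k, τ⁻¹ k = k := by
    intro k
    induction k using Fin.cases with
    | zero =>
        have j0 : Fin m := ⟨0, hm⟩
        have hk := key (Pi.single j0 1) 0
        rcases Fin.eq_zero_or_eq_succ (τ⁻¹ 0) with h0 | ⟨i, hi⟩
        · exact h0
        · exfalso
          rw [hi, Smap_apply_succ, Smap_apply_zero] at hk
          rw [Finset.sum_pi_single' j0 (1 : ℤ)] at hk
          simp only [Finset.mem_univ, if_true] at hk
          by_cases hij : i = j0
          · rw [hij, Pi.single_eq_same] at hk; omega
          · rw [Pi.single_eq_of_ne hij] at hk; omega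
    | succ j =>
        have hk := key (Pi.single j 1) j.succ
        rcases Fin.eq_zero_or_eq_succ (τ⁻¹ j.succ) with h0 | ⟨i, hi⟩
        · exfalso
          rw [h0, Smap_apply_zero, Smap_apply_succ, Pi.single_eq_same] at hk
          rw [Finset.sum_pi_single' j (1 : ℤ)] at hk
          simp only [Finset.mem_univ, if_true] at hk
          omega
        · rw [hi, Smap_apply_succ, Smap_apply_succ, Pi.single_eq_same] at hk
          by_cases hij : i = j
          · rw [hi, hij]
          · exfalso; rw [Pi.single_eq_of_ne hij] at hk; omega
  have : τ⁻¹ = 1 := Equiv.ext fun k => hfix k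
  simpa [inv_eq_one] using this

/-! ### The wreath product -/

/-- The base group of the wreath product. -/
abbrev WN (a m : ℕ) := Fin a → Equiv.Perm (Fin (m + 1))

/-- `Perm (Fin a)` acts on `WN a m` by permuting coordinates. -/
def phi (a m : ℕ) : Equiv.Perm (Fin a) →* MulAut (WN a m) where
  toFun σ :=
    { toFun := fun f => f ∘ ⇑σ.symm
      invFun := fun f => f ∘ ⇑σ
      left_inv := fun f => by funext i; simp
      right_inv := fun f => by funext i; simp
      map_mul' := fun f g => rfl }
  map_one' := by ext f i; rfl
  map_mul' σ₁ σ₂ := by ext f i; rfl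

lemma phi_apply {a m : ℕ} (σ : Equiv.Perm (Fin a)) (f : WN a m) (i : Fin a) :
    phi a m σ f i = f (σ.symm i) := rfl

/-- The wreath product `S_{m+1} ≀ S_a`. -/
abbrev Wr (a m : ℕ) := WN a m ⋊[phi a m] Equiv.Perm (Fin a)

/-- Blockwise action of the base group on `(ℤ^m)^a`. -/
noncomputable def rhoN (a m : ℕ) : WN a m →* Module.End ℤ (Fin a → Fin m → ℤ) where
  toFun f := LinearMap.pi fun i => rhoB m (f i) ∘ₗ LinearMap.proj i
  map_one' := by
    ext x i
    simp [LinearMap.pi_apply]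
  map_mul' f g := by
    ext x i
    simp [LinearMap.pi_apply, Module.End.mul_apply, Pi.mul_apply]

lemma rhoN_apply {a m : ℕ} (f : WN a m) (x : Fin a → Fin m → ℤ) (i : Fin a) :
    rhoN a m f x i = rhoB m (f i) (x i) := rfl

/-- Block-permutation action of `Perm (Fin a)` on `(ℤ^m)^a`. -/
noncomputable def rhoQ (a m : ℕ) : Equiv.Perm (Fin a) →* Module.End ℤ (Fin a → Fin m → ℤ) where
  toFun σ := LinearMap.funLeft ℤ (Fin m → ℤ) ⇑σ⁻¹
  map_one' := by ext x i; simp [LinearMap.funLeft_apply]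
  map_mul' σ₁ σ₂ := by
    ext x i
    simp [LinearMap.funLeft_apply, Module.End.mul_apply, mul_inv_rev, Equiv.Perm.mul_apply]

lemma rhoQ_apply {a m : ℕ} (σ : Equiv.Perm (Fin a)) (x : Fin a → Fin m → ℤ) (i : Fin a) :
    rhoQ a m σ x i = x (σ⁻¹ i) := rfl

lemma compat (a m : ℕ) : ∀ σ : Equiv.Perm (Fin a),
    ((rhoN a m).toHomUnits).comp (phi a m σ).toMonoidHom =
      (MulAut.conj ((rhoQ a m).toHomUnits σ)).toMonoidHom.comp (rhoN a m).toHomUnits := by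
  intro σ
  ext f : 1
  apply Units.ext
  show rhoN a m (phi a m σ f) =
    ((rhoQ a m).toHomUnits σ * (rhoN a m).toHomUnits f * ((rhoQ a m).toHomUnits σ)⁻¹ :
      (Module.End ℤ (Fin a → Fin m → ℤ))ˣ).val
  rw [← map_inv]
  simp only [Units.val_mul, MonoidHom.coe_toHomUnits]
  refine LinearMap.ext fun x => funext fun i => ?_
  simp only [Module.End.mul_apply, rhoN_apply, rhoQ_apply, phi_apply]
  rw [inv_inv, show σ (σ⁻¹ i) = i from σ.apply_symm_apply i]
  rfl

/-- The representation of the wreath product on `(ℤ^m)^a`, landing in units. -/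
noncomputable def Psi0 (a m : ℕ) : Wr a m →* (Module.End ℤ (Fin a → Fin m → ℤ))ˣ :=
  SemidirectProduct.lift (rhoN a m).toHomUnits (rhoQ a m).toHomUnits (compat a m)

lemma Psi0_injective {a m : ℕ} (hm : 0 < m) : Function.Injective (Psi0 a m) := by
  rw [injective_iff_map_eq_one]
  rintro ⟨f, σ⟩ hg
  have hval : (rhoN a m f) * (rhoQ a m σ) = 1 := by
    have : Psi0 a m ⟨f, σ⟩ = (rhoN a m).toHomUnits f * (rhoQ a m).toHomUnits σ := rfl
    rw [this] at hg
    have := congrArg Units.val hg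
    simpa using this
  have key : ∀ (x : Fin a → Fin m → ℤ) i, rhoB m (f i) (x (σ⁻¹ i)) = x i := by
    intro x i
    have := DFunLike.congr_fun hval x
    have := congrFun this i
    simpa [Module.End.mul_apply, rhoN_apply, rhoQ_apply] using this
  have hσ : ∀ i, σ⁻¹ i = i := by
    intro i
    by_contra hne
    set w : Fin m → ℤ := Pi.single (⟨0, hm⟩ : Fin m) 1 with hw
    have hk := key (Pi.single i w) i
    rw [Pi.single_eq_of_ne hne, Pi.single_eq_same, map_zero] at hk
    have := congrFun hk (⟨0, hm⟩ : Fin m)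
    rw [hw] at this
    simp [Pi.single_eq_same] at this
  have hf : ∀ i, rhoB m (f i) = 1 := by
    intro i
    apply LinearMap.ext
    intro y
    have hk := key (Pi.single i y) i
    rw [hσ i, Pi.single_eq_same] at hk
    simpa using hk
  have hf' : ∀ i, f i = 1 := fun i => rhoB_injective hm (by rw [hf i, map_one])
  have hσ' : σ = 1 := by
    have : σ⁻¹ = 1 := Equiv.ext hσ
    simpa [inv_eq_one] using this
  have hf'' : f = 1 := funext fun i => hf' i
  rw [show (⟨f, σ⟩ : Wr a m) = ⟨1, 1⟩ by rw [hf'', hσ']]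
  rfl

/-! ### Transport to `GL n ℤ` -/

/-- Conjugating endomorphisms by a linear equivalence, as a multiplicative equivalence. -/
def endCongr {R M N : Type*} [Semiring R] [AddCommMonoid M] [AddCommMonoid N]
    [Module R M] [Module R N] (e : M ≃ₗ[R] N) : Module.End R M ≃* Module.End R N where
  toFun f := e.toLinearMap ∘ₗ f ∘ₗ e.symm.toLinearMap
  invFun f := e.symm.toLinearMap ∘ₗ f ∘ₗ e.toLinearMap
  left_inv f := by ext x; simp
  right_inv f := by ext x; simp
  map_mul' f g := by ext x; simp [Module.End.mul_apply]

/-- Extend an endomorphism of `B` to `B × C` by the identity on `C`. -/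
def prodExt (R B C : Type*) [Semiring R] [AddCommMonoid B] [AddCommMonoid C]
    [Module R B] [Module R C] : Module.End R B →* Module.End R (B × C) where
  toFun g := g.prodMap LinearMap.id
  map_one' := by ext x <;> simp
  map_mul' f g := by ext x <;> simp [Module.End.mul_apply]

lemma prodExt_injective (R B C : Type*) [Semiring R] [AddCommMonoid B] [AddCommMonoid C]
    [Module R B] [Module R C] : Function.Injective (prodExt R B C) := by
  intro f g hfg
  ext b
  have := congrArg (fun F : Module.End R (B × C) => (F (b, 0)).1) hfg
  simpa [prodExt] using this

end GLnZAux

open GLnZAux in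
/-- For positive integers a, m, n with a·m ≤ n, the group GL_n(ℤ) has a
subgroup of order (m+1)!^a · a!. -/
theorem glnZ_has_subgroup_of_order (a m n : ℕ) (ha : 0 < a) (hm : 0 < m)
    (hn : 0 < n) (h : a * m ≤ n) :
    ∃ G : Subgroup (GL (Fin n) ℤ),
      Nat.card G = (Nat.factorial (m + 1)) ^ a * Nat.factorial a := by
  classical
  have h' : a * m + (n - a * m) = n := Nat.add_sub_cancel' h
  -- linear equivalences
  let e1 : (Fin a → Fin m → ℤ) ≃ₗ[ℤ] (Fin (a * m) → ℤ) :=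
    (LinearEquiv.curry ℤ ℤ (Fin a) (Fin m)).symm.trans
      (LinearEquiv.funCongrLeft ℤ ℤ finProdFinEquiv.symm)
  let e2 :=
    (LinearEquiv.sumArrowLequivProdArrow (Fin (a * m)) (Fin (n - a * m)) ℤ ℤ).symm.trans
      (LinearEquiv.funCongrLeft ℤ ℤ ((finSumFinEquiv.trans (finCongr h')).symm))
  -- the big endomorphism homomorphism
  let bigHom : Module.End ℤ (Fin a → Fin m → ℤ) →* Module.End ℤ (Fin n → ℤ) :=
    (endCongr e2).toMonoidHom.comp
      ((prodExt ℤ (Fin (a * m) → ℤ) (Fin (n - a * m) → ℤ)).comp (endCongr e1).toMonoidHom)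
  have bigHom_inj : Function.Injective bigHom := by
    have hb : ⇑bigHom = ⇑(endCongr e2) ∘ ⇑(prodExt ℤ (Fin (a * m) → ℤ) (Fin (n - a * m) → ℤ)) ∘
        ⇑(endCongr e1) := rfl
    rw [hb]
    exact (endCongr e2).injective.comp
      ((prodExt_injective ℤ _ _).comp (endCongr e1).injective)
  -- to matrices
  let mEquiv : (Module.End ℤ (Fin n → ℤ))ˣ ≃* GL (Fin n) ℤ :=
    Units.mapEquiv (LinearMap.toMatrixAlgEquiv' : _ ≃ₐ[ℤ] Matrix (Fin n) (Fin n) ℤ).toMulEquiv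
  let Psi : Wr a m →* GL (Fin n) ℤ :=
    mEquiv.toMonoidHom.comp ((Units.map bigHom).comp (Psi0 a m))
  have Psi_inj : Function.Injective Psi := by
    have hp : ⇑Psi = ⇑mEquiv ∘ ⇑(Units.map bigHom) ∘ ⇑(Psi0 a m) := rfl
    rw [hp]
    exact mEquiv.injective.comp ((Units.map_injective bigHom_inj).comp (Psi0_injective hm))
  refine ⟨Psi.range, ?_⟩
  have hcard1 : Nat.card Psi.range = Nat.card (Wr a m) :=
    (Nat.card_congr (MonoidHom.ofInjective Psi_inj).toEquiv).symm
  have eG : Wr a m ≃ (WN a m) × Equiv.Perm (Fin a) :=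
    ⟨fun g => (g.left, g.right), fun p => ⟨p.1, p.2⟩, fun g => rfl, fun p => rfl⟩
  rw [hcard1, Nat.card_congr eG, Nat.card_prod, Nat.card_fun]
  simp [Nat.card_eq_fintype_card, Fintype.card_perm]
end

section
/- Let g ∈ GL_n(ℂ) be a matrix of finite order a power of a prime p, with tr(g) ∈ ℚ. Then tr(g) is an integer of the form n − p·t for some integer t with 0 ≤ t ≤ ⌊n/(p−1)⌋. Moreover tr(g) = n only if g is the identity matrix. -/
open Polynomial Matrix

-- roots of charpoly satisfy same power equation
lemma aux_root_pow {n : ℕ} (A : Matrix (Fin n) (Fin n) ℂ) {m : ℕ} (hm : A ^ m = 1)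
    {μ : ℂ} (hμ : μ ∈ A.charpoly.roots) : μ ^ m = 1 := by
  classical
  have hroot : (A.charpoly).IsRoot μ := isRoot_of_mem_roots hμ
  have h1 : Polynomial.eval μ A.charpoly = Matrix.det (Matrix.scalar (Fin n) μ - A) := by
    rw [Matrix.charpoly, _root_.eval_det, matPolyEquiv_charmatrix]
    simp
  have hdet : Matrix.det (Matrix.scalar (Fin n) μ - A) = 0 := by
    rw [← h1]; exact hroot
  obtain ⟨v, hv0, hv⟩ := (Matrix.exists_mulVec_eq_zero_iff).2 hdet
  have hAv : A.mulVec v = μ • v := by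
    have := hv
    rw [Matrix.sub_mulVec, sub_eq_zero] at this
    rw [← this]
    ext i
    simp [Matrix.mulVec, dotProduct, Matrix.scalar, Matrix.diagonal_apply, Finset.mul_sum]
  have hpow : ∀ k : ℕ, (A ^ k).mulVec v = μ ^ k • v := by
    intro k
    induction k with
    | zero => simp [Matrix.one_mulVec]
    | succ k ih =>
      rw [pow_succ, pow_succ, ← Matrix.mulVec_mulVec, hAv, Matrix.mulVec_smul, ih, smul_smul,
        mul_comm]
  have := hpow m
  rw [hm, Matrix.one_mulVec] at this
  obtain ⟨i, hi⟩ := Function.ne_iff.1 hv0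
  have : v i = μ ^ m * v i := congrFun this i
  have hmu : (μ ^ m - 1) * v i = 0 := by ring_nf; linear_combination -this
  rcases mul_eq_zero.1 hmu with h | h
  · exact sub_eq_zero.1 h
  · exact absurd h hi

lemma aux_sum_swap {α : Type*} (M : Multiset ℂ) (S : Finset α) (f : α → ℂ → ℂ) :
    ∑ k ∈ S, (M.map (f k)).sum = (M.map (fun μ => ∑ k ∈ S, f k μ)).sum := by
  induction M using Multiset.induction with
  | empty => simp
  | cons a s ih => simp [Finset.sum_add_distrib, ih]

lemma aux_all_eq_one (s : Multiset ℝ) (h1 : ∀ x ∈ s, x ≤ 1) (hs : (Multiset.card s : ℝ) ≤ s.sum) :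
    ∀ x ∈ s, x = 1 := by
  intro x hx
  by_contra hne
  obtain ⟨t, rfl⟩ := Multiset.exists_cons_of_mem hx
  have hxlt : x < 1 := lt_of_le_of_ne (h1 x hx) hne
  have ht : t.sum ≤ Multiset.card t • (1:ℝ) :=
    Multiset.sum_le_card_nsmul t 1 (fun y hy => h1 y (Multiset.mem_cons_of_mem hy))
  simp only [Multiset.sum_cons, Multiset.card_cons] at hs ht
  push_cast at hs ht
  simp at ht
  linarith

lemma aux_geom (x : ℂ) (s : ℕ) (hx : x ^ s = 1) :
    ∑ k ∈ Finset.range s, x ^ k = if x = 1 then (s : ℂ) else 0 := by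
  split_ifs with h
  · simp [h]
  · rw [geom_sum_eq h, hx]; simp

lemma aux_filter_dvd (p q : ℕ) (hp : 0 < p) :
    (Finset.range (p * q)).filter (fun k => p ∣ k) = (Finset.range q).image (fun j => p * j) := by
  ext k
  simp only [Finset.mem_filter, Finset.mem_range, Finset.mem_image]
  constructor
  · rintro ⟨hk, j, rfl⟩
    exact ⟨j, by exact lt_of_mul_lt_mul_left hk (le_of_lt hp), rfl⟩
  · rintro ⟨j, hj, rfl⟩
    exact ⟨by exact Nat.mul_lt_mul_left hp |>.mpr hj, ⟨j, rfl⟩⟩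

lemma aux_T (p r₀ : ℕ) (hp : p.Prime) (μ : ℂ) (hμ : μ ^ (p ^ (r₀+1)) = 1) :
    ∃ T : ℝ, -((p:ℝ)^r₀) ≤ T ∧
      ∑ k ∈ (Finset.range (p^(r₀+1))).filter (fun k => Nat.Coprime (p^(r₀+1)) k), μ ^ k
        = (T : ℂ) := by
  have hm : p ^ (r₀+1) = p * p ^ r₀ := by ring
  have hμp : (μ ^ p) ^ (p ^ r₀) = 1 := by rw [← pow_mul, ← hm]; exact hμ
  have hsplit := Finset.sum_filter_add_sum_filter_not (Finset.range (p^(r₀+1)))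
    (fun k => Nat.Coprime (p^(r₀+1)) k) (fun k => μ ^ k)
  have hnc : (Finset.range (p^(r₀+1))).filter (fun k => ¬ Nat.Coprime (p^(r₀+1)) k)
      = (Finset.range (p^(r₀+1))).filter (fun k => p ∣ k) := by
    apply Finset.filter_congr
    intro k _
    simp only [Nat.coprime_pow_left_iff (Nat.succ_pos r₀),
      Nat.Prime.coprime_iff_not_dvd hp, not_not]
  have hsum2 : ∑ k ∈ (Finset.range (p^(r₀+1))).filter (fun k => p ∣ k), μ ^ k
      = ∑ j ∈ Finset.range (p ^ r₀), (μ ^ p) ^ j := by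
    rw [hm, aux_filter_dvd p (p ^ r₀) hp.pos, Finset.sum_image
      (fun a _ b _ h => by exact mul_left_cancel₀ hp.pos.ne' h)]
    simp [pow_mul]
  refine ⟨(if μ = 1 then ((p:ℝ)^(r₀+1)) else 0) - (if μ ^ p = 1 then ((p:ℝ)^r₀) else 0), ?_, ?_⟩
  · have h1 : (0:ℝ) ≤ (p:ℝ)^(r₀+1) := by positivity
    have h2 : (0:ℝ) ≤ (p:ℝ)^r₀ := by positivity
    split_ifs <;> linarith
  · have := hsplit
    rw [hnc, hsum2] at this
    have hG1 : ∑ k ∈ Finset.range (p^(r₀+1)), μ ^ k = if μ = 1 then ((p^(r₀+1) : ℕ) : ℂ) else 0 :=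
      aux_geom μ _ hμ
    have hG2 : ∑ j ∈ Finset.range (p ^ r₀), (μ ^ p) ^ j
        = if μ ^ p = 1 then ((p^r₀ : ℕ) : ℂ) else 0 := aux_geom _ _ hμp
    have : ∑ k ∈ (Finset.range (p^(r₀+1))).filter (fun k => Nat.Coprime (p^(r₀+1)) k), μ ^ k
        = (if μ = 1 then ((p^(r₀+1) : ℕ) : ℂ) else 0) - (if μ ^ p = 1 then ((p^r₀ : ℕ) : ℂ) else 0) := by
      rw [← hG1, ← hG2]; linear_combination this
    rw [this]
    push_cast
    split_ifs <;> simp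

set_option maxHeartbeats 2000000 in
/-- If g ∈ GL_n(ℂ) has order a power of the prime p and tr(g) ∈ ℚ, then
tr(g) = n − p·t for some natural number t ≤ ⌊n/(p−1)⌋, and tr(g) = n only
for g = 1. -/
theorem trace_of_p_power_order_matrix (n p : ℕ) (hp : p.Prime)
    (g : GL (Fin n) ℂ) (hord : ∃ r : ℕ, g ^ p ^ r = 1)
    (htr : ∃ q : ℚ, Matrix.trace (g : Matrix (Fin n) (Fin n) ℂ) = (q : ℂ)) :
    (∃ t : ℕ, t ≤ n / (p - 1) ∧
      Matrix.trace (g : Matrix (Fin n) (Fin n) ℂ) = (n : ℂ) - p * t) ∧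
    (Matrix.trace (g : Matrix (Fin n) (Fin n) ℂ) = (n : ℂ) → g = 1) := by
  classical
  haveI : Fact p.Prime := ⟨hp⟩
  obtain ⟨r₀, hr₀⟩ := hord
  obtain ⟨q, hq⟩ := htr
  set A : Matrix (Fin n) (Fin n) ℂ := (g : Matrix (Fin n) (Fin n) ℂ) with hAdef
  set m := p ^ (r₀ + 1) with hmdef
  have hm0 : m ≠ 0 := (pow_pos hp.pos _).ne'
  haveI : NeZero m := ⟨hm0⟩
  haveI : NeZero ((m : ℂ)) := ⟨by exact_mod_cast hm0⟩
  have hAm : A ^ m = 1 := by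
    have hg : g ^ m = 1 := by
      rw [hmdef, pow_succ, pow_mul, hr₀, one_pow]
    calc A ^ m = ((g ^ m : GL (Fin n) ℂ) : Matrix (Fin n) (Fin n) ℂ) := by
          rw [Units.val_pow_eq_pow_val]
      _ = 1 := by rw [hg]; rfl
  set M := A.charpoly.roots with hMdef
  have hsplits : A.charpoly.Splits := IsAlgClosed.splits _
  have hcard : Multiset.card M = n := by
    rw [hMdef, (Polynomial.splits_iff_card_roots).1 hsplits, Matrix.charpoly_natDegree_eq_dim,
      Fintype.card_fin]
  have htrM : Matrix.trace A = M.sum := Matrix.trace_eq_sum_roots_charpoly A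
  have hroots : ∀ μ ∈ M, μ ^ m = 1 := fun μ hμ => aux_root_pow A hAm hμ
  have habs : ∀ μ ∈ M, ‖μ‖ = 1 := by
    intro μ hμ
    have h1 : (‖μ‖) ^ m = 1 := by
      rw [← norm_pow, hroots μ hμ]
      simp
    rcases lt_trichotomy (‖μ‖) 1 with h | h | h
    · exact absurd h1 (by nlinarith [pow_lt_one₀ (norm_nonneg μ) h hm0])
    · exact h
    · exact absurd h1 (by nlinarith [one_lt_pow₀ h hm0])
  -- integrality of the trace
  have hint : ∀ μ ∈ M, IsIntegral ℤ μ := by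
    intro μ hμ
    refine ⟨(X : ℤ[X]) ^ m - C 1, monic_X_pow_sub_C 1 hm0, ?_⟩
    simp [hroots μ hμ]
  have hintsum : IsIntegral ℤ (M.sum) :=
    Subalgebra.multiset_sum_mem (integralClosure ℤ ℂ) (fun x hx => hint x hx)
  have hintq : IsIntegral ℤ q := by
    rw [← isIntegral_algebraMap_iff (algebraMap ℚ ℂ).injective]
    have h2 : (algebraMap ℚ ℂ) q = (q : ℂ) := by norm_num
    rw [h2, ← hq, htrM]
    exact hintsum
  obtain ⟨z, hz⟩ := IsIntegrallyClosed.isIntegral_iff.1 hintq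
  have htrz : Matrix.trace A = (z : ℂ) := by
    rw [hq, ← hz]
    push_cast
    norm_num
  -- upper bound z ≤ n
  have hsumre : (M.sum).re = (M.map Complex.re).sum := by
    simpa [Complex.coe_reAddGroupHom] using map_multiset_sum Complex.reAddGroupHom M
  have hre_le : ∀ x ∈ M.map Complex.re, x ≤ 1 := by
    rintro x hx
    obtain ⟨μ, hμ, rfl⟩ := Multiset.mem_map.1 hx
    calc μ.re ≤ ‖μ‖ := Complex.re_le_norm μ
      _ = 1 := habs μ hμ
  have hzre : (z:ℝ) = (M.sum).re := by rw [← htrM, htrz]; simp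
  have hzn : (z : ℝ) ≤ n := by
    have h5 : (M.map Complex.re).sum ≤ (Multiset.card (M.map Complex.re)) • (1:ℝ) :=
      Multiset.sum_le_card_nsmul _ _ hre_le
    rw [Multiset.card_map, hcard] at h5
    rw [hzre, hsumre]
    simpa using h5
  have hznz : z ≤ (n:ℤ) := by exact_mod_cast hzn
  -- primitive root and exponents
  have hζ : IsPrimitiveRoot (Complex.exp (2 * Real.pi * Complex.I / m)) m :=
    Complex.isPrimitiveRoot_exp m hm0
  set ζ : ℂ := Complex.exp (2 * Real.pi * Complex.I / m) with hζdef
  have hex : ∀ μ ∈ M, ∃ i : ℕ, ζ ^ i = μ := by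
    intro μ hμ
    obtain ⟨i, _, hi⟩ := hζ.eq_pow_of_pow_eq_one (hroots μ hμ)
    exact ⟨i, hi⟩
  choose! a ha using hex
  set f : Polynomial ℤ := (M.map (fun μ => (X : Polynomial ℤ) ^ a μ)).sum - C z with hfdef
  have hevalf : ∀ x : ℂ, Polynomial.eval x (f.map (Int.castRingHom ℂ))
      = (M.map (fun μ => x ^ a μ)).sum - (z : ℂ) := by
    intro x
    have hEe : Polynomial.eval x (f.map (Int.castRingHom ℂ))
        = ((Polynomial.evalRingHom x).comp (Polynomial.mapRingHom (Int.castRingHom ℂ))) f := by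
      simp
    rw [hEe, hfdef, map_sub, map_multiset_sum]
    simp [Multiset.map_map, Function.comp]
  have hfζ : Polynomial.eval ζ (f.map (Int.castRingHom ℂ)) = 0 := by
    rw [hevalf]
    have : M.map (fun μ => ζ ^ a μ) = M :=
      Multiset.map_congr rfl (fun μ hμ => ha μ hμ) |>.trans (Multiset.map_id M)
    rw [this, ← htrM, htrz]
    ring
  have hdvd : Polynomial.cyclotomic m ℤ ∣ f := by
    rw [← Polynomial.map_dvd_map (Int.castRingHom ℚ) Int.cast_injective
      (Polynomial.cyclotomic.monic m ℤ), Polynomial.map_cyclotomic]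
    rw [Polynomial.cyclotomic_eq_minpoly_rat hζ (Nat.pos_of_ne_zero hm0)]
    apply minpoly.dvd
    rw [Polynomial.aeval_def, Polynomial.eval₂_eq_eval_map, Polynomial.map_map]
    have hcomp : (algebraMap ℚ ℂ).comp (Int.castRingHom ℚ) = Int.castRingHom ℂ := by
      ext1 x
      simp
    rw [hcomp]
    exact hfζ
  obtain ⟨h, hh⟩ := hdvd
  have hp2 : (2:ℤ) ≤ (p:ℤ) := by exact_mod_cast hp.two_le
  have heval1 : Polynomial.eval 1 f = (n : ℤ) - z := by
    have hEe : Polynomial.eval 1 f = (Polynomial.evalRingHom (1:ℤ)) f := rfl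
    rw [hEe, hfdef, map_sub, map_multiset_sum]
    have hmc : (M.map (fun μ => (X : Polynomial ℤ) ^ a μ)).map (Polynomial.evalRingHom (1:ℤ))
        = M.map (fun _ => (1:ℤ)) := by
      rw [Multiset.map_map]
      apply Multiset.map_congr rfl
      intro μ _
      simp
    rw [hmc]
    simp [Multiset.map_const', hcard]
  have ht'eq : (n : ℤ) - z = p * Polynomial.eval 1 h := by
    rw [← heval1, hh, Polynomial.eval_mul, hmdef, Polynomial.eval_one_cyclotomic_prime_pow]
  set S : Finset ℕ := (Finset.range m).filter (fun k => Nat.Coprime m k) with hSdef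
  have hScard : S.card = p ^ r₀ * (p - 1) := by
    have h9 : S.card = Nat.totient m := rfl
    rw [h9, hmdef, Nat.totient_prime_pow hp (Nat.succ_pos r₀)]
    simp
  have hdvdC : f.map (Int.castRingHom ℂ)
      = (Polynomial.cyclotomic m ℂ) * (h.map (Int.castRingHom ℂ)) := by
    rw [hh, Polynomial.map_mul, Polynomial.map_cyclotomic]
  have hSsum : ∀ k ∈ S, (M.map (fun μ => μ ^ k)).sum = (z : ℂ) := by
    intro k hk
    obtain ⟨hkr, hkc⟩ := Finset.mem_filter.1 hk
    have hprim : IsPrimitiveRoot (ζ ^ k) m := hζ.pow_of_coprime k (Nat.Coprime.symm hkc)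
    have hroot : Polynomial.eval (ζ ^ k) (Polynomial.cyclotomic m ℂ) = 0 :=
      Polynomial.isRoot_cyclotomic_iff.2 hprim
    have h0 : Polynomial.eval (ζ ^ k) (f.map (Int.castRingHom ℂ)) = 0 := by
      rw [hdvdC, Polynomial.eval_mul, hroot, zero_mul]
    rw [hevalf] at h0
    have hmapeq : M.map (fun μ => (ζ ^ k) ^ a μ) = M.map (fun μ => μ ^ k) := by
      apply Multiset.map_congr rfl
      intro μ hμ
      calc (ζ ^ k) ^ a μ = (ζ ^ a μ) ^ k := by rw [← pow_mul, mul_comm, pow_mul]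
        _ = μ ^ k := by rw [ha μ hμ]
    rw [hmapeq] at h0
    exact sub_eq_zero.1 h0
  have hswap := aux_sum_swap M S (fun k μ => μ ^ k)
  have hleft : ∑ k ∈ S, (M.map (fun μ => μ ^ k)).sum = (S.card : ℂ) * z := by
    rw [Finset.sum_congr rfl hSsum]
    simp [mul_comm]
  have hT : ∀ μ ∈ M, ∃ T : ℝ, -((p:ℝ)^r₀) ≤ T ∧ ∑ k ∈ S, μ ^ k = (T : ℂ) := by
    intro μ hμ
    have h10 := aux_T p r₀ hp μ (by rw [← hmdef]; exact hroots μ hμ)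
    rw [← hmdef] at h10
    exact h10
  choose! T hT1 hT2 using hT
  have hmapT : M.map (fun μ => ∑ k ∈ S, μ ^ k) = M.map (fun μ => ((T μ : ℝ) : ℂ)) :=
    Multiset.map_congr rfl (fun μ hμ => hT2 μ hμ)
  have hkey : ((S.card : ℝ) * (z:ℝ) : ℂ) = (((M.map T).sum : ℝ) : ℂ) := by
    push_cast
    rw [← hleft, hswap, hmapT]
    have h11 : (M.map (fun μ => ((T μ : ℝ) : ℂ))) = (M.map T).map (Complex.ofRealHom) := by
      rw [Multiset.map_map]
      rfl
    rw [h11, ← map_multiset_sum]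
    rfl
  have hkeyR : (S.card : ℝ) * (z:ℝ) = (M.map T).sum := by exact_mod_cast hkey
  have hlb : -((n:ℝ) * (p:ℝ)^r₀) ≤ (M.map T).sum := by
    have h6 : (Multiset.card (M.map T)) • (-((p:ℝ)^r₀)) ≤ (M.map T).sum :=
      Multiset.card_nsmul_le_sum (by
        rintro x hx
        obtain ⟨μ, hμ, rfl⟩ := Multiset.mem_map.1 hx
        exact hT1 μ hμ)
    rw [Multiset.card_map, hcard] at h6
    have h6' : (n:ℝ) * (-((p:ℝ)^r₀)) ≤ (M.map T).sum := by
      simpa [nsmul_eq_mul] using h6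
    linarith [h6']
  have hcardR : (S.card : ℝ) = (p:ℝ)^r₀ * ((p:ℝ) - 1) := by
    rw [hScard]
    have : ((p - 1 : ℕ) : ℝ) = (p:ℝ) - 1 := by
      rw [Nat.cast_sub hp.one_lt.le]
      simp
    push_cast [this]
    ring
  have hppos : (0:ℝ) < (p:ℝ)^r₀ := by
    have hp0 : (0:ℝ) < (p:ℝ) := by exact_mod_cast hp.pos
    exact pow_pos hp0 r₀
  have hlow : -(n:ℝ) ≤ ((p:ℝ) - 1) * z := by
    have h7 : 0 ≤ (p:ℝ)^r₀ * (((p:ℝ) - 1) * z + n) := by nlinarith [hkeyR, hlb, hcardR]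
    nlinarith [h7, hppos]
  have hlowz : -(n:ℤ) ≤ ((p:ℤ) - 1) * z := by exact_mod_cast hlow
  set t' : ℤ := Polynomial.eval 1 h with ht'def
  have ht'0 : 0 ≤ t' := by nlinarith [ht'eq, hznz, hp2]
  have hz' : z = (n:ℤ) - p * t' := by linarith [ht'eq]
  have hub : ((p:ℤ) - 1) * t' ≤ n := by
    have h8 : (p:ℤ) * (((p:ℤ) - 1) * t') ≤ (p:ℤ) * n := by
      rw [hz'] at hlowz
      nlinarith [hlowz]
    exact le_of_mul_le_mul_left h8 (by linarith)
  constructor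
  · refine ⟨t'.toNat, ?_, ?_⟩
    · rw [Nat.le_div_iff_mul_le (by omega : 0 < p - 1)]
      have h13 : (t'.toNat : ℤ) * ((p:ℤ) - 1) ≤ (n:ℤ) := by
        rw [Int.toNat_of_nonneg ht'0]
        linarith [hub]
      have hps : ((p - 1 : ℕ) : ℤ) = (p:ℤ) - 1 := by
        push_cast [Nat.cast_sub hp.one_lt.le]
        ring
      rw [← hps] at h13
      exact_mod_cast h13
    · rw [htrz]
      have htn : (t'.toNat : ℤ) = t' := Int.toNat_of_nonneg ht'0
      have hzeq : (z : ℂ) = (n:ℂ) - (p:ℂ) * (((t'.toNat : ℤ)) : ℂ) := by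
        rw [htn, hz']
        push_cast
        ring
      rw [hzeq]
      norm_cast
  · intro hn
    rcases Nat.eq_zero_or_pos n with hn0 | hn0
    · subst hn0
      apply Units.ext
      exact Subsingleton.elim _ _
    haveI : Nonempty (Fin n) := ⟨⟨0, hn0⟩⟩
    have hzn' : z = (n:ℤ) := by
      have h20 : (z:ℂ) = (n:ℂ) := by rw [← htrz, hn]
      exact_mod_cast h20
    have hsum_n : (M.map Complex.re).sum = (n:ℝ) := by
      rw [← hsumre, ← hzre, hzn']
      push_cast
      ring
    have hall : ∀ x ∈ M.map Complex.re, x = 1 := by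
      have h21 : (Multiset.card (M.map Complex.re) : ℝ) ≤ (M.map Complex.re).sum := by
        simp [Multiset.card_map, hcard, hsum_n]
      exact aux_all_eq_one _ hre_le h21
    have hM1 : ∀ μ ∈ M, μ = 1 := by
      intro μ hμ
      have h1 : μ.re = 1 := hall μ.re (Multiset.mem_map_of_mem _ hμ)
      have h2 : Complex.normSq μ = 1 := by
        have h22 := habs μ hμ
        rw [← Complex.sq_norm, h22]
        norm_num
      have h23 := Complex.normSq_apply μ
      have h3 : μ.im = 0 := by nlinarith [h23, h2, h1]
      exact Complex.ext (by simp [h1]) (by simp [h3])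
    have hMrep : M = Multiset.replicate n (1:ℂ) := Multiset.eq_replicate.2 ⟨hcard, hM1⟩
    have hcharpoly : A.charpoly = ((X : Polynomial ℂ) - C 1) ^ n := by
      have h24 := hsplits.eq_prod_roots_of_monic A.charpoly_monic
      rw [← hMdef, hMrep] at h24
      rw [h24, Multiset.map_replicate, Multiset.prod_replicate]
    have hCH : (A - 1) ^ n = 0 := by
      have h4 := A.aeval_self_charpoly
      rw [hcharpoly] at h4
      rw [map_pow, map_sub, Polynomial.aeval_X, Polynomial.aeval_C] at h4
      simpa using h4
    have hAint : IsIntegral ℂ A := ⟨A.charpoly, A.charpoly_monic, A.aeval_self_charpoly⟩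
    have d1 : minpoly ℂ A ∣ (X : Polynomial ℂ) ^ m - C 1 := by
      apply minpoly.dvd
      rw [map_sub, map_pow, Polynomial.aeval_X, Polynomial.aeval_C]
      simp [hAm]
    have sep : ((X : Polynomial ℂ) ^ m - C 1).Separable := by
      apply Polynomial.separable_X_pow_sub_C
      · exact_mod_cast hm0
      · exact one_ne_zero
    have sqf : Squarefree (minpoly ℂ A) := (sep.of_dvd d1).squarefree
    have d2 : minpoly ℂ A ∣ ((X : Polynomial ℂ) - C 1) ^ n := by
      apply minpoly.dvd
      rw [map_pow, map_sub, Polynomial.aeval_X, Polynomial.aeval_C]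
      simpa using hCH
    obtain ⟨i, hin, hass⟩ := (dvd_prime_pow (Polynomial.prime_X_sub_C (1:ℂ)) n).1 d2
    have heq : minpoly ℂ A = ((X : Polynomial ℂ) - C 1) ^ i :=
      Polynomial.eq_of_monic_of_associated (minpoly.monic hAint)
        ((Polynomial.monic_X_sub_C (1:ℂ)).pow i) hass
    have hi1 : i = 1 := by
      match i, heq with
      | 0, heq => exact absurd (by rw [heq, pow_zero]) (minpoly.ne_one ℂ A)
      | 1, heq => rfl
      | (i+2), heq =>
        exfalso
        have h25 : ((X : Polynomial ℂ) - C 1) * ((X : Polynomial ℂ) - C 1) ∣ minpoly ℂ A := by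
          rw [heq, ← pow_two]
          exact pow_dvd_pow _ (by omega)
        exact (Polynomial.prime_X_sub_C (1:ℂ)).not_unit (sqf _ h25)
    have hmin : minpoly ℂ A = (X : Polynomial ℂ) - C 1 := by rw [heq, hi1, pow_one]
    have hA1 : A = 1 := by
      have h5 := minpoly.aeval ℂ A
      rw [hmin, map_sub, Polynomial.aeval_X, Polynomial.aeval_C] at h5
      have h26 : A - 1 = 0 := by simpa using h5
      exact sub_eq_zero.1 h26
    exact Units.ext hA1
end

section
/- The quaternion group Q_8, realized as the group of complex 2×2 matrices {±I, ±g, ±h, ±gh} with g = [[0,−1],[1,0]] and h = [[i,0],[0,−i]], has all traces rational, but there is no invertible complex 2×2 matrix a such that a·x·a⁻¹ has all real entries for every x in the group. -/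
lemma quatReal (p q r s e f k l : ℝ)
    (e1 : p*p + q*r = -1) (e2 : p*q + q*s = 0) (e3 : r*p + s*r = 0)
    (f1 : e*e + f*k = -1) (f2 : e*f + f*l = 0) (f3 : k*e + l*k = 0)
    (t : p*e + q*k + (r*f + s*l) = 0) : False := by
  have hs : s = -p := by
    rcases eq_or_ne (p + s) 0 with h | h
    · linarith
    · have hq : q = 0 := by
        rcases mul_eq_zero.mp (show q * (p + s) = 0 by ring_nf; linarith [e2]) with h' | h'
        · exact h'
        · exact absurd h' h
      have hr : r = 0 := by
        rcases mul_eq_zero.mp (show r * (p + s) = 0 by ring_nf; linarith [e3]) with h' | h'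
        · exact h'
        · exact absurd h' h
      nlinarith [sq_nonneg p, e1, hq, hr]
  have hl : l = -e := by
    rcases eq_or_ne (e + l) 0 with h | h
    · linarith
    · have hq : f = 0 := by
        rcases mul_eq_zero.mp (show f * (e + l) = 0 by ring_nf; linarith [f2]) with h' | h'
        · exact h'
        · exact absurd h' h
      have hr : k = 0 := by
        rcases mul_eq_zero.mp (show k * (e + l) = 0 by ring_nf; linarith [f3]) with h' | h'
        · exact h'
        · exact absurd h' h
      nlinarith [sq_nonneg e, f1, hq, hr]
  subst hs hl
  have key : (q*k + r*f)^2 = (q*k - r*f)^2 + 4*(q*r)*(f*k) := by ring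
  have h1 : q*k + r*f = -2*(p*e) := by linarith [t]
  have h2 : q*r = -1 - p*p := by linarith
  have h3 : f*k = -1 - e*e := by linarith
  have h23 : (q*r)*(f*k) = (-1 - p*p)*(-1 - e*e) := by rw [h2, h3]
  have h1sq : (q*k + r*f)^2 = 4*(p*e)^2 := by rw [h1]; ring
  nlinarith [sq_nonneg (q*k - r*f), sq_nonneg p, sq_nonneg e, key, h23, h1sq, sq_nonneg (p*e)]

open Complex in
/-- The quaternion group Q₈ realized as the complex 2×2 matrices
{±1, ±g, ±h, ±gh} with g = [[0,−1],[1,0]], h = [[i,0],[0,−i]]: all traces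
are rational, but no invertible complex matrix a conjugates all elements of
the group into matrices with real entries. -/
theorem quaternion_group_rational_traces_not_realizable_over_R :
    ∀ g h : Matrix (Fin 2) (Fin 2) ℂ,
      g = !![0, -1; 1, 0] → h = !![I, 0; 0, -I] →
      ∀ S : Set (Matrix (Fin 2) (Fin 2) ℂ),
        S = {1, -1, g, -g, h, -h, g * h, -(g * h)} →
        (∀ x ∈ S, ∃ q : ℚ, Matrix.trace x = (q : ℂ)) ∧
        ¬ ∃ a : Matrix (Fin 2) (Fin 2) ℂ, IsUnit a ∧
            ∀ x ∈ S, ∀ i j : Fin 2, ∃ r : ℝ, (a * x * a⁻¹) i j = (r : ℂ) := by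
  intro g h hg hh S hS
  have hg2 : g * g = -1 := by
    subst hg; ext i j; fin_cases i <;> fin_cases j <;>
      simp [Matrix.mul_apply, Fin.sum_univ_two]
  have hh2 : h * h = -1 := by
    subst hh; ext i j; fin_cases i <;> fin_cases j <;>
      simp [Matrix.mul_apply, Fin.sum_univ_two, Complex.I_mul_I]
  have htrgh : Matrix.trace (g * h) = 0 := by
    subst hg hh
    simp [Matrix.trace_fin_two, Matrix.mul_apply, Fin.sum_univ_two]
  constructor
  · intro x hx
    rw [hS] at hx
    simp only [Set.mem_insert_iff, Set.mem_singleton_iff] at hx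
    rcases hx with rfl | rfl | rfl | rfl | rfl | rfl | rfl | rfl
    · exact ⟨2, by simp [Matrix.trace_one]⟩
    · exact ⟨-2, by simp [Matrix.trace_one]⟩
    · exact ⟨0, by subst hg; norm_num [Matrix.trace_fin_two]⟩
    · exact ⟨0, by subst hg; norm_num [Matrix.trace_fin_two]⟩
    · exact ⟨0, by subst hh; norm_num [Matrix.trace_fin_two]⟩
    · exact ⟨0, by subst hh; norm_num [Matrix.trace_fin_two]⟩
    · exact ⟨0, by rw [htrgh]; norm_num⟩
    · exact ⟨0, by rw [Matrix.trace_neg, htrgh]; norm_num⟩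
  · rintro ⟨a, ha, hreal⟩
    have hdet : IsUnit a.det := (Matrix.isUnit_iff_isUnit_det a).mp ha
    have hinv : a⁻¹ * a = 1 := Matrix.nonsing_inv_mul a hdet
    have hinv' : a * a⁻¹ = 1 := Matrix.mul_nonsing_inv a hdet
    have key : ∀ X Y : Matrix (Fin 2) (Fin 2) ℂ,
        (a * X * a⁻¹) * (a * Y * a⁻¹) = a * (X * Y) * a⁻¹ := by
      intro X Y
      calc (a * X * a⁻¹) * (a * Y * a⁻¹)
          = a * X * ((a⁻¹ * a) * (Y * a⁻¹)) := by
            simp only [Matrix.mul_assoc]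
        _ = a * (X * Y) * a⁻¹ := by rw [hinv]; simp only [Matrix.one_mul, Matrix.mul_assoc]
    set M : Matrix (Fin 2) (Fin 2) ℂ := a * g * a⁻¹ with hM
    set N : Matrix (Fin 2) (Fin 2) ℂ := a * h * a⁻¹ with hN
    have hM2 : M * M = -1 := by
      rw [hM, key, hg2]
      simp only [Matrix.mul_neg, Matrix.neg_mul, Matrix.mul_one]
      rw [hinv']
    have hN2 : N * N = -1 := by
      rw [hN, key, hh2]
      simp only [Matrix.mul_neg, Matrix.neg_mul, Matrix.mul_one]
      rw [hinv']
    have hMN : M * N = a * (g * h) * a⁻¹ := key g h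
    have htr : Matrix.trace (M * N) = 0 := by
      rw [hMN, Matrix.trace_mul_cycle, ← Matrix.mul_assoc, hinv, Matrix.one_mul, htrgh]
    -- extract real entries
    have hgS : g ∈ S := by rw [hS]; simp
    have hhS : h ∈ S := by rw [hS]; simp
    obtain ⟨p, hp⟩ := hreal g hgS 0 0
    obtain ⟨q, hq⟩ := hreal g hgS 0 1
    obtain ⟨r, hr⟩ := hreal g hgS 1 0
    obtain ⟨s, hs⟩ := hreal g hgS 1 1
    obtain ⟨e, he⟩ := hreal h hhS 0 0
    obtain ⟨f, hf⟩ := hreal h hhS 0 1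
    obtain ⟨k, hk⟩ := hreal h hhS 1 0
    obtain ⟨l, hl⟩ := hreal h hhS 1 1
    rw [← hM] at hp hq hr hs
    rw [← hN] at he hf hk hl
    have E00 : (M * M) 0 0 = (-1 : Matrix (Fin 2) (Fin 2) ℂ) 0 0 := by rw [hM2]
    have E01 : (M * M) 0 1 = (-1 : Matrix (Fin 2) (Fin 2) ℂ) 0 1 := by rw [hM2]
    have E10 : (M * M) 1 0 = (-1 : Matrix (Fin 2) (Fin 2) ℂ) 1 0 := by rw [hM2]
    have F00 : (N * N) 0 0 = (-1 : Matrix (Fin 2) (Fin 2) ℂ) 0 0 := by rw [hN2]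
    have F01 : (N * N) 0 1 = (-1 : Matrix (Fin 2) (Fin 2) ℂ) 0 1 := by rw [hN2]
    have F10 : (N * N) 1 0 = (-1 : Matrix (Fin 2) (Fin 2) ℂ) 1 0 := by rw [hN2]
    simp only [Matrix.mul_apply, Fin.sum_univ_two, Matrix.neg_apply, Matrix.one_apply_eq,
      Matrix.one_apply_ne (by decide : (0 : Fin 2) ≠ 1),
      Matrix.one_apply_ne (by decide : (1 : Fin 2) ≠ 0), neg_zero] at E00 E01 E10 F00 F01 F10
    rw [Matrix.trace_fin_two, Matrix.mul_apply, Matrix.mul_apply, Fin.sum_univ_two,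
      Fin.sum_univ_two] at htr
    simp only [hp, hq, hr, hs] at E00 E01 E10
    simp only [he, hf, hk, hl] at F00 F01 F10
    simp only [hp, hq, hr, hs, he, hf, hk, hl] at htr
    have e1 : p*p + q*r = -1 := by exact_mod_cast E00
    have e2 : p*q + q*s = 0 := by exact_mod_cast E01
    have e3 : r*p + s*r = 0 := by exact_mod_cast E10
    have f1 : e*e + f*k = -1 := by exact_mod_cast F00
    have f2 : e*f + f*l = 0 := by exact_mod_cast F01
    have f3 : k*e + l*k = 0 := by exact_mod_cast F10
    have t : p*e + q*k + (r*f + s*l) = 0 := by exact_mod_cast htr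
    exact quatReal p q r s e f k l e1 e2 e3 f1 f2 f3 t
end

section
/- Let ℓ be an odd prime, f a positive integer, and p a prime whose residue class generates (ℤ/ℓ²ℤ)^×. Then the ℓ-part of |GL_n(F_{p^f})| equals ℓ^{(1+v_ℓ(f))·⌊n/τ⌋} · (⌊n/τ⌋!)_ℓ, where τ = (ℓ−1)/gcd(ℓ−1, f) and v_ℓ is the ℓ-adic valuation. -/
open Finset

-- translation: congruence to 1 mod k  ↔  divisibility of p^m - 1
private lemma key_cast (p k m : ℕ) (hp : 0 < p) :
    ((p : ZMod k) ^ m = 1 ↔ k ∣ p ^ m - 1) := by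
  have h1 : (1 : ℕ) ≤ p ^ m := Nat.one_le_pow _ _ hp
  rw [← Nat.cast_pow, ← Nat.cast_one, ZMod.natCast_eq_natCast_iff]
  exact ⟨fun h => (Nat.modEq_iff_dvd' h1).mp h.symm,
    fun h => ((Nat.modEq_iff_dvd' h1).mpr h).symm⟩

private lemma aux_ord (ℓ p : ℕ) (hℓ : ℓ.Prime) (hp : p.Prime)
    (hgen : ∃ u : (ZMod (ℓ ^ 2))ˣ, (u : ZMod (ℓ ^ 2)) = (p : ZMod (ℓ ^ 2)) ∧
      ∀ v : (ZMod (ℓ ^ 2))ˣ, v ∈ Subgroup.zpowers u) :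
    (¬ ℓ ∣ p) ∧ (∀ m : ℕ, (ℓ ∣ p ^ m - 1 ↔ (ℓ - 1) ∣ m)) ∧
      (p ^ (ℓ - 1) - 1).factorization ℓ = 1 := by
  haveI : Fact ℓ.Prime := ⟨hℓ⟩
  haveI : NeZero (ℓ ^ 2) := ⟨pow_ne_zero 2 hℓ.pos.ne'⟩
  obtain ⟨u, hu, hgen'⟩ := hgen
  have hℓ2 := hℓ.two_le
  have hord_u : orderOf u = ℓ * (ℓ - 1) := by
    rw [orderOf_eq_card_of_forall_mem_zpowers hgen', Nat.card_eq_fintype_card,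
      ZMod.card_units_eq_totient, Nat.totient_prime_pow hℓ (by norm_num), pow_one]
  have hpu : ∀ m : ℕ, ((p : ZMod (ℓ ^ 2)) ^ m = 1 ↔ ℓ * (ℓ - 1) ∣ m) := by
    intro m
    rw [← hu, ← Units.val_pow_eq_pow_val, Units.val_eq_one, ← hord_u,
      orderOf_dvd_iff_pow_eq_one]
  have hℓp : ¬ ℓ ∣ p := by
    have hunit : IsUnit (p : ZMod (ℓ ^ 2)) := hu ▸ u.isUnit
    rw [ZMod.isUnit_iff_coprime] at hunit
    intro h
    have : ℓ ∣ Nat.gcd p (ℓ ^ 2) := Nat.dvd_gcd h (dvd_pow_self ℓ two_ne_zero)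
    rw [hunit] at this
    have := Nat.le_of_dvd one_pos this
    omega
  -- order of p mod ℓ is ℓ - 1
  set r := orderOf (p : ZMod ℓ) with hrdef
  have hpne : (p : ZMod ℓ) ≠ 0 := by
    rw [Ne, ZMod.natCast_eq_zero_iff]; exact hℓp
  have hfermat : (p : ZMod ℓ) ^ (ℓ - 1) = 1 := ZMod.pow_card_sub_one_eq_one hpne
  have hrdvd : r ∣ ℓ - 1 := orderOf_dvd_of_pow_eq_one hfermat
  have hr0 : r ≠ 0 := by
    have : IsOfFinOrder (p : ZMod ℓ) :=
      isOfFinOrder_iff_pow_eq_one.mpr ⟨ℓ - 1, by omega, hfermat⟩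
    exact this.orderOf_pos.ne'
  have hdr : ℓ ∣ p ^ r - 1 := (key_cast p ℓ r hp.pos).mp (pow_orderOf_eq_one _)
  obtain ⟨t, ht⟩ := hdr
  have hpr : p ^ r = 1 + ℓ * t := by
    have : 1 ≤ p ^ r := Nat.one_le_pow _ _ hp.pos
    omega
  have hZ : ((ℓ : ℤ)) ^ 2 ∣ (p : ℤ) ^ (r * ℓ) - 1 := by
    have h2 := sq_dvd_add_pow_sub_sub ((ℓ : ℤ) * t) (1 : ℤ) ℓ
    obtain ⟨c, hc⟩ := h2
    have e : (p : ℤ) ^ (r * ℓ) = (1 + (ℓ : ℤ) * t) ^ ℓ := by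
      rw [pow_mul]
      norm_cast
      rw [hpr]
    rw [e]
    refine ⟨t ^ 2 * c + t, ?_⟩
    simp only [one_pow] at hc
    linear_combination hc
  have hdvd2 : ℓ ^ 2 ∣ p ^ (r * ℓ) - 1 := by
    have h1 : (1 : ℕ) ≤ p ^ (r * ℓ) := Nat.one_le_pow _ _ hp.pos
    rw [← Int.natCast_dvd_natCast, Int.ofNat_sub h1]
    push_cast
    exact hZ
  have hcong : (p : ZMod (ℓ ^ 2)) ^ (r * ℓ) = 1 := (key_cast p (ℓ ^ 2) (r * ℓ) hp.pos).mpr hdvd2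
  have hd : ℓ * (ℓ - 1) ∣ r * ℓ := (hpu _).mp hcong
  have hℓ1r : (ℓ - 1) ∣ r := by
    rw [mul_comm r ℓ] at hd
    exact (Nat.mul_dvd_mul_iff_left hℓ.pos).mp hd
  have hr : r = ℓ - 1 := Nat.dvd_antisymm hrdvd hℓ1r
  have hord : ∀ m : ℕ, (ℓ ∣ p ^ m - 1 ↔ (ℓ - 1) ∣ m) := by
    intro m
    rw [← key_cast p ℓ m hp.pos, ← hr, hrdef, orderOf_dvd_iff_pow_eq_one]
  refine ⟨hℓp, hord, ?_⟩
  -- valuation of p^(ℓ-1) - 1 is exactly 1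
  have hd1 : ℓ ∣ p ^ (ℓ - 1) - 1 := (hord _).mpr dvd_rfl
  have hnd2 : ¬ ℓ ^ 2 ∣ p ^ (ℓ - 1) - 1 := by
    intro h
    have h2 := (hpu (ℓ - 1)).mp ((key_cast p (ℓ ^ 2) (ℓ - 1) hp.pos).mpr h)
    have h3 := Nat.le_of_dvd (by omega) h2
    have h4 : 2 * (ℓ - 1) ≤ ℓ * (ℓ - 1) := Nat.mul_le_mul_right _ hℓ2
    omega
  have hne : p ^ (ℓ - 1) - 1 ≠ 0 := by
    have h1 : 1 < p ^ (ℓ - 1) := Nat.one_lt_pow (by omega) hp.one_lt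
    omega
  have v1 : 1 ≤ (p ^ (ℓ - 1) - 1).factorization ℓ :=
    (hℓ.pow_dvd_iff_le_factorization hne).mp (by rwa [pow_one])
  have v2 : ¬ 2 ≤ (p ^ (ℓ - 1) - 1).factorization ℓ := fun h =>
    hnd2 ((hℓ.pow_dvd_iff_le_factorization hne).mpr h)
  omega

private lemma aux_term (ℓ p f : ℕ) (hℓ : ℓ.Prime) (hodd : Odd ℓ) (hp : p.Prime) (hf : 0 < f)
    (hℓp : ¬ ℓ ∣ p) (hord : ∀ m : ℕ, (ℓ ∣ p ^ m - 1 ↔ (ℓ - 1) ∣ m))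
    (hval : (p ^ (ℓ - 1) - 1).factorization ℓ = 1) (j : ℕ) (hj : 0 < j) :
    ((p ^ f) ^ j - 1).factorization ℓ =
      if ((ℓ - 1) / Nat.gcd (ℓ - 1) f) ∣ j then
        1 + f.factorization ℓ + (j / ((ℓ - 1) / Nat.gcd (ℓ - 1) f)).factorization ℓ
      else 0 := by
  haveI : Fact ℓ.Prime := ⟨hℓ⟩
  have hℓ2 := hℓ.two_le
  set g := Nat.gcd (ℓ - 1) f with hg
  set τ := (ℓ - 1) / g with hτ
  have hg_pos : 0 < g := Nat.gcd_pos_of_pos_left f (by omega)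
  have hτg : τ * g = ℓ - 1 := Nat.div_mul_cancel (Nat.gcd_dvd_left _ _)
  have hτpos : 0 < τ := by
    rcases Nat.eq_zero_or_pos τ with h | h
    · rw [h, zero_mul] at hτg; omega
    · exact h
  set f' := f / g with hf'def
  have hfg : f = g * f' := (Nat.mul_div_cancel' (Nat.gcd_dvd_right (ℓ - 1) f)).symm
  have hfgpos : 0 < f' := Nat.div_pos (Nat.le_of_dvd hf (Nat.gcd_dvd_right _ _)) hg_pos
  have hcop : Nat.Coprime τ f' := Nat.coprime_div_gcd_div_gcd hg_pos
  have hiff : τ ∣ j ↔ (ℓ - 1) ∣ f * j := by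
    constructor
    · rintro ⟨k, rfl⟩
      exact ⟨f' * k, by rw [← hτg, hfg]; ring⟩
    · intro h
      have h1 : τ * g ∣ (f' * j) * g := by
        rw [hτg]
        have e : (f' * j) * g = f * j := by rw [hfg]; ring
        rw [e]; exact h
      have h2 : τ ∣ f' * j := (Nat.mul_dvd_mul_iff_right hg_pos).mp h1
      exact hcop.dvd_of_dvd_mul_left h2
  by_cases hdvd : τ ∣ j
  · rw [if_pos hdvd]
    have hj' : τ * (j / τ) = j := Nat.mul_div_cancel' hdvd
    set m := f' * (j / τ) with hm
    have hjτpos : 0 < j / τ := Nat.div_pos (Nat.le_of_dvd hj hdvd) hτpos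
    have hm0 : m ≠ 0 := Nat.mul_ne_zero hfgpos.ne' hjτpos.ne'
    have hfj : f * j = (ℓ - 1) * m := by rw [← hτg, hfg, ← hj', hm]; ring
    have hx1 : 1 < p ^ (ℓ - 1) := Nat.one_lt_pow (by omega) hp.one_lt
    have hℓx : ¬ ℓ ∣ p ^ (ℓ - 1) := fun h => hℓp (hℓ.prime.dvd_of_dvd_pow h)
    have hd1 : ℓ ∣ p ^ (ℓ - 1) - 1 := (hord _).mpr dvd_rfl
    have key := padicValNat.pow_sub_pow (p := ℓ) hodd hx1 hd1 hℓx hm0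
    have e1 : (p ^ f) ^ j = (p ^ (ℓ - 1)) ^ m := by rw [← pow_mul, ← pow_mul, hfj]
    have e2 : ((p ^ f) ^ j - 1).factorization ℓ
        = padicValNat ℓ ((p ^ (ℓ - 1)) ^ m - 1 ^ m) := by
      rw [Nat.factorization_def _ hℓ, e1, one_pow]
    rw [e2, key]
    have hv1 : padicValNat ℓ (p ^ (ℓ - 1) - 1) = 1 := by
      rw [← Nat.factorization_def _ hℓ]; exact hval
    have hvm : padicValNat ℓ m = f.factorization ℓ + (j / τ).factorization ℓ := by
      rw [← Nat.factorization_def _ hℓ, hm, Nat.factorization_mul hfgpos.ne' hjτpos.ne']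
      simp only [Finsupp.coe_add, Pi.add_apply]
      congr 1
      have hgℓ : ¬ ℓ ∣ g := by
        intro h
        have h1 := h.trans (Nat.gcd_dvd_left _ _)
        have := Nat.le_of_dvd (by omega) h1
        omega
      conv_rhs => rw [hfg]
      rw [Nat.factorization_mul hg_pos.ne' hfgpos.ne']
      simp [Nat.factorization_eq_zero_of_not_dvd hgℓ]
    rw [hv1, hvm]
    omega
  · rw [if_neg hdvd]
    apply Nat.factorization_eq_zero_of_not_dvd
    rw [← pow_mul, hord]
    exact fun h => hdvd (hiff.mpr h)

private lemma aux_sum (ℓ p f : ℕ) (hℓ : ℓ.Prime) (hodd : Odd ℓ) (hp : p.Prime) (hf : 0 < f)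
    (hℓp : ¬ ℓ ∣ p) (hord : ∀ m : ℕ, (ℓ ∣ p ^ m - 1 ↔ (ℓ - 1) ∣ m))
    (hval : (p ^ (ℓ - 1) - 1).factorization ℓ = 1) (n : ℕ) :
    ∑ j ∈ range n, ((p ^ f) ^ (j + 1) - 1).factorization ℓ =
      (1 + f.factorization ℓ) * (n / ((ℓ - 1) / Nat.gcd (ℓ - 1) f)) +
        (Nat.factorial (n / ((ℓ - 1) / Nat.gcd (ℓ - 1) f))).factorization ℓ := by
  set τ := (ℓ - 1) / Nat.gcd (ℓ - 1) f with hτ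
  induction n with
  | zero => simp
  | succ n ih =>
    rw [Finset.sum_range_succ, ih,
      aux_term ℓ p f hℓ hodd hp hf hℓp hord hval (n + 1) n.succ_pos, Nat.succ_div]
    by_cases hdvd : τ ∣ n + 1
    · rw [if_pos hdvd, if_pos hdvd]
      rw [← hτ]
      have hfact : (Nat.factorial (n / τ + 1)).factorization ℓ =
          (Nat.factorial (n / τ)).factorization ℓ + (n / τ + 1).factorization ℓ := by
        rw [Nat.factorial_succ,
          Nat.factorization_mul (Nat.succ_ne_zero _) (Nat.factorial_ne_zero _)]
        simp [add_comm]
      rw [hfact, Nat.mul_succ]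
      omega
    · rw [if_neg hdvd, if_neg hdvd]
      rw [← hτ]
      simp

/-- Let ℓ be an odd prime, f > 0, and p a prime whose residue class
generates (ℤ/ℓ²ℤ)ˣ.  Then the ℓ-part of |GL_n(F_{p^f})| equals
ℓ^{(1+v_ℓ(f))·⌊n/τ⌋} · (⌊n/τ⌋!)_ℓ where τ = (ℓ−1)/gcd(ℓ−1, f). -/
theorem ell_part_card_GL (ℓ p f n : ℕ) (hℓ : ℓ.Prime) (hodd : Odd ℓ)
    (hp : p.Prime) (hf : 0 < f)
    (hgen : ∃ u : (ZMod (ℓ ^ 2))ˣ, (u : ZMod (ℓ ^ 2)) = (p : ZMod (ℓ ^ 2)) ∧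
      ∀ v : (ZMod (ℓ ^ 2))ˣ, v ∈ Subgroup.zpowers u)
    (F : Type) [Field F] [Fintype F] (hF : Fintype.card F = p ^ f) :
    ℓ ^ ((Nat.card (GL (Fin n) F)).factorization ℓ) =
      ℓ ^ ((1 + f.factorization ℓ) * (n / ((ℓ - 1) / Nat.gcd (ℓ - 1) f))) *
        ℓ ^ ((Nat.factorial (n / ((ℓ - 1) / Nat.gcd (ℓ - 1) f))).factorization ℓ) := by
  obtain ⟨hℓp, hord, hval⟩ := aux_ord ℓ p hℓ hp hgen
  rw [← pow_add]
  congr 1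
  have hq2 : 1 < p ^ f := Nat.one_lt_pow hf.ne' hp.one_lt
  have hcard := Matrix.card_GL_field (𝔽 := F) n
  rw [hcard, Fin.prod_univ_eq_prod_range (fun i => Fintype.card F ^ n - Fintype.card F ^ i) n]
  simp only [hF]
  have hterm : ∀ i ∈ range n,
      (p ^ f) ^ n - (p ^ f) ^ i = (p ^ f) ^ i * ((p ^ f) ^ (n - i) - 1) := by
    intro i hi
    rw [Nat.mul_sub, mul_one, ← pow_add, Nat.add_sub_cancel' (le_of_lt (mem_range.mp hi))]
  rw [Finset.prod_congr rfl hterm]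
  have hne : ∀ i ∈ range n, (p ^ f) ^ i * ((p ^ f) ^ (n - i) - 1) ≠ 0 := by
    intro i hi
    have hi' := mem_range.mp hi
    have h1 : 1 < (p ^ f) ^ (n - i) := Nat.one_lt_pow (by omega) hq2
    have h2 : 0 < (p ^ f) ^ i := pow_pos (by omega) i
    have h3 : 0 < (p ^ f) ^ (n - i) - 1 := by omega
    exact Nat.mul_ne_zero h2.ne' h3.ne'
  rw [Nat.factorization_prod hne, Finsupp.finset_sum_apply]
  have hterm2 : ∀ i ∈ range n,
      ((p ^ f) ^ i * ((p ^ f) ^ (n - i) - 1)).factorization ℓ =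
        ((p ^ f) ^ (n - i) - 1).factorization ℓ := by
    intro i hi
    have hi' := mem_range.mp hi
    have h1 : 1 < (p ^ f) ^ (n - i) := Nat.one_lt_pow (by omega) hq2
    have h2 : (p ^ f) ^ i ≠ 0 := (pow_pos (by omega) i).ne'
    rw [Nat.factorization_mul h2 (by omega), Finsupp.coe_add, Pi.add_apply,
      Nat.factorization_eq_zero_of_not_dvd, zero_add]
    intro hdv
    exact hℓp (hℓ.dvd_of_dvd_pow (hℓ.dvd_of_dvd_pow hdv))
  rw [Finset.sum_congr rfl hterm2]
  have hreflect := Finset.sum_range_reflect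
    (fun j => ((p ^ f) ^ (j + 1) - 1).factorization ℓ) n
  have hsum : ∑ i ∈ range n, ((p ^ f) ^ (n - i) - 1).factorization ℓ =
      ∑ j ∈ range n, ((p ^ f) ^ (j + 1) - 1).factorization ℓ := by
    rw [← hreflect]
    refine Finset.sum_congr rfl fun i hi => ?_
    have hi' := mem_range.mp hi
    have he : n - i = n - 1 - i + 1 := by omega
    rw [he]
  rw [hsum, aux_sum ℓ p f hℓ hodd hp hf hℓp hord hval n]
end

section
/- The kernel of the reduction homomorphism GL_n(ℤ_{(p)}) → GL_n(F_p) is torsion-free for every odd prime p; for p = 2, every nontrivial torsion element of the kernel has order 2, and the kernel of GL_n(ℤ_{(2)}) → GL_n(ℤ/4ℤ) is torsion-free. -/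
open Finset IsLocalRing

section Engine
variable {R : Type*} [CommRing R] {n : ℕ}

/-- The ideal generated by the entries of a matrix. -/
def entIdeal (a : Matrix (Fin n) (Fin n) R) : Ideal R :=
  Ideal.span (Set.range fun p : Fin n × Fin n => a p.1 p.2)

lemma entry_mem_entIdeal (a : Matrix (Fin n) (Fin n) R) (i j : Fin n) :
    a i j ∈ entIdeal a :=
  Ideal.subset_span ⟨(i, j), rfl⟩

lemma entIdeal_le (a : Matrix (Fin n) (Fin n) R) {I : Ideal R}
    (h : ∀ i j, a i j ∈ I) : entIdeal a ≤ I := by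
  rw [entIdeal, Ideal.span_le]
  rintro x ⟨⟨i, j⟩, rfl⟩
  exact h i j

lemma pow_entry_mem (a : Matrix (Fin n) (Fin n) R) (I : Ideal R)
    (ha : ∀ i j, a i j ∈ I) : ∀ m, 1 ≤ m → ∀ i j, (a ^ m) i j ∈ I ^ m := by
  intro m
  induction m with
  | zero => intro h; exact absurd h (by omega)
  | succ m ih =>
    intro _ i j
    rcases Nat.eq_zero_or_pos m with rfl | hm1
    · simpa using ha i j
    · rw [pow_succ, pow_succ, Matrix.mul_apply]
      exact Ideal.sum_mem _ fun k _ => Ideal.mul_mem_mul (ih hm1 i k) (ha k j)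

open Finset in
lemma key_eq {S : Type*} [Ring S] (a : S) (q : ℕ) (hq : 1 ≤ q)
    (h : (1 + a) ^ q = 1) :
    q • a = - ∑ i ∈ range (q - 1), q.choose (i + 2) • a ^ (i + 2) := by
  have hc : Commute a 1 := Commute.one_right a
  have hb := hc.add_pow q
  rw [add_comm a 1] at hb
  rw [h] at hb
  simp only [one_pow, mul_one] at hb
  rw [Finset.sum_range_succ'] at hb
  simp only [pow_zero, Nat.choose_zero_right, Nat.cast_one, one_mul] at hb
  have h0 : (0 : S) = ∑ i ∈ range q, a ^ (i + 1) * (q.choose (i + 1) : S) := by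
    have := congrArg (fun z => z - 1) hb
    simpa using this
  obtain ⟨q', rfl⟩ : ∃ q', q = q' + 1 := ⟨q - 1, (Nat.succ_pred_eq_of_pos hq).symm⟩
  rw [Finset.sum_range_succ'] at h0
  simp only [zero_add, Nat.choose_one_right, pow_one] at h0
  have h1 : a * ((q' + 1 : ℕ) : S) = - ∑ i ∈ range q', a ^ (i + 1 + 1) * ((q' + 1).choose (i + 1 + 1) : S) := by
    exact eq_neg_of_add_eq_zero_right h0.symm
  simp only [Nat.add_sub_cancel]
  rw [nsmul_eq_mul, (Nat.cast_commute (q' + 1 : ℕ) a).eq, h1]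
  congr 1
  apply Finset.sum_congr rfl
  intro i _
  rw [nsmul_eq_mul, (Nat.cast_commute _ _).eq.symm]

lemma entry_rel (x : Matrix (Fin n) (Fin n) R) (q : ℕ) (hq : 1 ≤ q)
    (hx : x ^ q = 1) (K : Ideal R)
    (hK : ∀ m, 2 ≤ m → m ≤ q → ∀ y ∈ entIdeal (x - 1) ^ m, (q.choose m : R) * y ∈ K) :
    ∀ i j, (q : R) * (x - 1) i j ∈ K := by
  intro i j
  have h1 : (1 + (x - 1)) ^ q = 1 := by rwa [add_sub_cancel]
  have h2 := key_eq (x - 1) q hq h1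
  have h3 := congrFun (congrFun h2 i) j
  rw [Matrix.smul_apply, Matrix.neg_apply, Matrix.sum_apply] at h3
  rw [nsmul_eq_mul] at h3
  rw [h3]
  apply neg_mem
  apply Ideal.sum_mem
  intro k hk
  rw [Finset.mem_range] at hk
  have hterm : (q.choose (k + 2) • (x - 1) ^ (k + 2)) i j
      = (q.choose (k + 2) : R) * ((x - 1) ^ (k + 2)) i j := by
    rw [Matrix.smul_apply, nsmul_eq_mul]
  rw [hterm]
  exact hK (k + 2) (by omega) (by omega) _
    (pow_entry_mem (x - 1) _ (entry_mem_entIdeal _) (k + 2) (by omega) i j)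

lemma tail [IsLocalRing R] (x : Matrix (Fin n) (Fin n) R)
    (hone : ∀ i j, (x - 1) i j ∈ maximalIdeal R • entIdeal (x - 1)) : x = 1 := by
  have hle : entIdeal (x - 1) ≤ maximalIdeal R • entIdeal (x - 1) :=
    entIdeal_le _ hone
  have hbot : entIdeal (x - 1) = ⊥ :=
    Submodule.eq_bot_of_le_smul_of_le_jacobson_bot (maximalIdeal R) _
      (Submodule.fg_span (Set.finite_range _)) hle
      (by rw [jacobson_eq_maximalIdeal ⊥ bot_ne_top])
  have hz : ∀ i j, (x - 1) i j = 0 := by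
    intro i j
    have := entry_mem_entIdeal (x - 1) i j
    rwa [hbot, Ideal.mem_bot] at this
  have hx1 : x - 1 = 0 := by ext i j; simpa using hz i j
  rwa [sub_eq_zero] at hx1

lemma tail2 [IsLocalRing R] (x : Matrix (Fin n) (Fin n) R)
    (hmem : ∀ i j, (x - 1) i j ∈ maximalIdeal R)
    (hII : ∀ i j, (x - 1) i j ∈ entIdeal (x - 1) * entIdeal (x - 1)) : x = 1 := by
  apply tail
  intro i j
  rw [Ideal.smul_eq_mul]
  exact Ideal.mul_mono_left (entIdeal_le _ hmem) (hII i j)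

lemma eng_unit [IsLocalRing R] (x : Matrix (Fin n) (Fin n) R) (q : ℕ)
    (hq : 1 ≤ q) (hu : IsUnit (q : R)) (hx : x ^ q = 1)
    (hmem : ∀ i j, (x - 1) i j ∈ maximalIdeal R) : x = 1 := by
  set I := entIdeal (x - 1) with hI
  have h2 : ∀ i j, (q : R) * (x - 1) i j ∈ I * I := by
    refine entry_rel x q hq hx _ ?_
    intro m h2m hmq y hy
    have hle : I ^ m ≤ I * I := by
      rw [← pow_two]; exact Ideal.pow_le_pow_right h2m
    exact Ideal.mul_mem_left _ _ (hle hy)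
  refine tail2 x hmem ?_
  intro i j
  obtain ⟨u, hu⟩ := hu
  have key := Ideal.mul_mem_left (I * I) (↑u⁻¹) (h2 i j)
  rwa [← hu, ← mul_assoc, Units.inv_mul, one_mul] at key

lemma eng_odd [IsDomain R] [IsLocalRing R] (p : ℕ) (hp : p.Prime) (hodd : Odd p)
    (hm : maximalIdeal R = Ideal.span {(p : R)}) (hp0 : (p : R) ≠ 0)
    (x : Matrix (Fin n) (Fin n) R) (hx : x ^ p = 1)
    (hmem : ∀ i j, (x - 1) i j ∈ maximalIdeal R) : x = 1 := by
  have hp3 : 3 ≤ p := by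
    have := hp.two_le
    rcases Nat.odd_iff.mp hodd with h2
    omega
  set I := entIdeal (x - 1) with hI
  have hIm : I ≤ Ideal.span {(p : R)} := hm ▸ entIdeal_le _ hmem
  have h2 : ∀ i j, (p : R) * (x - 1) i j ∈ Ideal.span {(p : R)} * (I * I) := by
    refine entry_rel x p hp.one_lt.le hx _ ?_
    intro m h2m hmq y hy
    rcases eq_or_lt_of_le hmq with hme | hlt
    · subst hme
      rw [Nat.choose_self, Nat.cast_one, one_mul]
      have hle : I ^ m ≤ Ideal.span {((m : ℕ) : R)} * (I * I) := by
        refine (Ideal.pow_le_pow_right (show 3 ≤ m from hp3)).trans ?_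
        have h3 : I ^ 3 = I * (I * I) := by ring
        rw [h3]
        exact Ideal.mul_mono_left hIm
      exact hle hy
    · obtain ⟨c, hc⟩ := hp.dvd_choose_self (by omega) hlt
      rw [hc, Nat.cast_mul, mul_assoc]
      refine Ideal.mul_mem_mul (Ideal.mem_span_singleton_self _) ?_
      refine Ideal.mul_mem_left _ _ ?_
      exact ((Ideal.pow_le_pow_right h2m).trans (le_of_eq (pow_two I))) hy
  refine tail2 x hmem ?_
  intro i j
  obtain ⟨z, hz, hpz⟩ := Ideal.mem_span_singleton_mul.mp (h2 i j)
  have : z = (x - 1) i j := mul_left_cancel₀ hp0 hpz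
  rwa [← this]

lemma eng_two [IsDomain R] [IsLocalRing R]
    (hm : maximalIdeal R = Ideal.span {(2 : R)}) (h20 : (2 : R) ≠ 0)
    (x : Matrix (Fin n) (Fin n) R) (hx : x ^ 2 = 1)
    (hmem : ∀ i j, (x - 1) i j ∈ Ideal.span {(2 : R)} * Ideal.span {(2 : R)}) : x = 1 := by
  set I := entIdeal (x - 1) with hI
  have hIm : I ≤ Ideal.span {(2 : R)} * Ideal.span {(2 : R)} := entIdeal_le _ hmem
  have h2 : ∀ i j, ((2 : ℕ) : R) * (x - 1) i j
      ∈ Ideal.span {(2 : R)} * (Ideal.span {(2 : R)} * I) := by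
    refine entry_rel x 2 one_le_two hx _ ?_
    intro m h2m hmq y hy
    have hm2 : m = 2 := le_antisymm hmq h2m
    subst hm2
    rw [Nat.choose_self, Nat.cast_one, one_mul]
    have hle : I ^ 2 ≤ Ideal.span {(2 : R)} * (Ideal.span {(2 : R)} * I) := by
      rw [pow_two, ← mul_assoc]
      exact Ideal.mul_mono_left hIm
    exact hle hy
  apply tail
  intro i j
  obtain ⟨z, hz, hpz⟩ := Ideal.mem_span_singleton_mul.mp (by exact_mod_cast h2 i j)
  have hzz : z = (x - 1) i j := mul_left_cancel₀ h20 hpz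
  rw [← hzz, Ideal.smul_eq_mul, hm]
  exact hz

end Engine
section GLAux

variable {R S : Type*} [CommRing R] [CommRing S] {n : ℕ}

lemma map_one_entries (f : R →+* S) (g : GL (Fin n) R)
    (hg : Matrix.GeneralLinearGroup.map f g = 1) :
    ∀ i j, ((g : Matrix (Fin n) (Fin n) R) - 1) i j ∈ RingHom.ker f := by
  intro i j
  have h2 : f (g i j) = (1 : Matrix (Fin n) (Fin n) S) i j := by
    rw [← Matrix.GeneralLinearGroup.map_apply f i j g, hg]
    rfl
  rw [RingHom.mem_ker, Matrix.sub_apply, map_sub, h2]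
  by_cases hij : i = j <;> simp [Matrix.one_apply, hij]

lemma aux_step (f : R →+* S) (g : GL (Fin n) R)
    (hg : Matrix.GeneralLinearGroup.map f g = 1) (hfin : IsOfFinOrder g)
    (q : ℕ) (hq : 0 < q) (hdvd : q ∣ orderOf g) :
    ∃ h : GL (Fin n) R, orderOf h = q ∧
      ((h : Matrix (Fin n) (Fin n) R)) ^ q = 1 ∧
      ∀ i j, ((h : Matrix (Fin n) (Fin n) R) - 1) i j ∈ RingHom.ker f := by
  refine ⟨g ^ (orderOf g / q), orderOf_pow_orderOf_div hfin.orderOf_pos.ne' hdvd, ?_, ?_⟩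
  · have hgl : (g ^ (orderOf g / q)) ^ q = 1 := by
      rw [← pow_mul, Nat.div_mul_cancel hdvd, pow_orderOf_eq_one]
    simpa [Units.val_pow_eq_pow_val] using congrArg Units.val hgl
  · apply map_one_entries
    rw [map_pow, hg, one_pow]

lemma gl_eq_one_of_coe (g : GL (Fin n) R)
    (h : (g : Matrix (Fin n) (Fin n) R) = 1) : g = 1 :=
  Units.ext (by simpa using h)

end GLAux

/-- The kernel of GL_n(ℤ_(p)) → GL_n(F_p) is torsion-free for odd primes p;
for p = 2 every nontrivial torsion element of the kernel has order 2, and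
the kernel of GL_n(ℤ_(2)) → GL_n(ℤ/4ℤ) is torsion-free.  (A ring hom from
ℤ_(p) to ZMod p, resp. ZMod 4, is unique, namely reduction of entries.) -/
theorem torsion_in_kernel_of_reduction_ZLocalization (n p : ℕ) (hp : p.Prime)
    [h : (Ideal.span {(p : ℤ)}).IsPrime] :
    (Odd p → ∀ f : Localization.AtPrime (Ideal.span {(p : ℤ)}) →+* ZMod p,
      ∀ g : GL (Fin n) (Localization.AtPrime (Ideal.span {(p : ℤ)})),
        Matrix.GeneralLinearGroup.map f g = 1 → IsOfFinOrder g → g = 1) ∧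
    (p = 2 → ∀ f : Localization.AtPrime (Ideal.span {(p : ℤ)}) →+* ZMod p,
      ∀ g : GL (Fin n) (Localization.AtPrime (Ideal.span {(p : ℤ)})),
        Matrix.GeneralLinearGroup.map f g = 1 → IsOfFinOrder g → g ≠ 1 →
          orderOf g = 2) ∧
    (p = 2 → ∀ f : Localization.AtPrime (Ideal.span {(p : ℤ)}) →+* ZMod 4,
      ∀ g : GL (Fin n) (Localization.AtPrime (Ideal.span {(p : ℤ)})),
        Matrix.GeneralLinearGroup.map f g = 1 → IsOfFinOrder g → g = 1) := by
  haveI := Fact.mk hp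
  set R := Localization.AtPrime (Ideal.span {(p : ℤ)}) with hR
  have hinj : Function.Injective (algebraMap ℤ R) :=
    IsLocalization.injective R (Ideal.span {(p : ℤ)}).primeCompl_le_nonZeroDivisors
  have hcast : algebraMap ℤ R ((p : ℕ) : ℤ) = ((p : ℕ) : R) := map_natCast _ p
  have hp0 : ((p : ℕ) : R) ≠ 0 := by
    intro h0
    have h1 : algebraMap ℤ R ((p : ℕ) : ℤ) = algebraMap ℤ R 0 := by
      rw [hcast, h0, map_zero]
    have h2 := hinj h1
    rw [Int.natCast_eq_zero] at h2
    exact hp.ne_zero h2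
  have hmax : IsLocalRing.maximalIdeal R = Ideal.span {((p : ℕ) : R)} := by
    rw [← Localization.AtPrime.map_eq_maximalIdeal, Ideal.map_span, Set.image_singleton, hcast]
  have hker : ∀ f : R →+* ZMod p, RingHom.ker f = IsLocalRing.maximalIdeal R := by
    intro f
    apply le_antisymm
    · exact IsLocalRing.le_maximalIdeal (RingHom.ker_ne_top f)
    · rw [hmax, Ideal.span_le]
      intro x hx
      rw [Set.mem_singleton_iff] at hx
      subst hx
      rw [SetLike.mem_coe, RingHom.mem_ker, map_natCast, ZMod.natCast_self]
  have hunit : ∀ q : ℕ, q.Prime → q ≠ p → IsUnit ((q : ℕ) : R) := by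
    intro q hq hqp
    have hmemc : (q : ℤ) ∈ (Ideal.span {(p : ℤ)}).primeCompl := by
      show (q : ℤ) ∉ Ideal.span {(p : ℤ)}
      rw [Ideal.mem_span_singleton]
      intro hdvd
      rw [Int.natCast_dvd_natCast] at hdvd
      exact hqp ((Nat.prime_dvd_prime_iff_eq hp hq).mp hdvd).symm
    have hu := IsLocalization.map_units R
      (⟨(q : ℤ), hmemc⟩ : (Ideal.span {(p : ℤ)}).primeCompl)
    rwa [show algebraMap ℤ R ((q : ℕ) : ℤ) = ((q : ℕ) : R) from map_natCast _ q] at hu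
  refine ⟨?_, ?_, ?_⟩
  · -- odd p : torsion-free
    intro hodd f g hg hfin
    by_contra hg1
    have hN1 : orderOf g ≠ 1 := fun e => hg1 (orderOf_eq_one_iff.mp e)
    have hq : (orderOf g).minFac.Prime := Nat.minFac_prime hN1
    obtain ⟨k, hordk, hpow, hment⟩ :=
      aux_step f g hg hfin (orderOf g).minFac hq.pos (Nat.minFac_dvd _)
    have hmm : ∀ i j, ((k : Matrix (Fin n) (Fin n) R) - 1) i j ∈ IsLocalRing.maximalIdeal R :=
      fun i j => (hker f) ▸ hment i j
    have hmat : (k : Matrix (Fin n) (Fin n) R) = 1 := by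
      rcases eq_or_ne (orderOf g).minFac p with hqp | hqp
      · rw [hqp] at hpow
        exact eng_odd p hp hodd hmax hp0 _ hpow hmm
      · exact eng_unit _ _ hq.one_lt.le (hunit _ hq hqp) hpow hmm
    have hk1 := gl_eq_one_of_coe k hmat
    rw [hk1, orderOf_one] at hordk
    exact hq.one_lt.ne hordk
  · -- p = 2 : nontrivial torsion in kernel has order 2
    intro hp2 f g hg hfin hg1
    subst hp2
    have hc2 : ((2 : ℕ) : R) = (2 : R) := by norm_cast
    have hmax2 : IsLocalRing.maximalIdeal R = Ideal.span {(2 : R)} := by rw [hmax, hc2]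
    have h20 : (2 : R) ≠ 0 := hc2 ▸ hp0
    have hN0 : orderOf g ≠ 0 := hfin.orderOf_pos.ne'
    have hN1 : orderOf g ≠ 1 := fun e => hg1 (orderOf_eq_one_iff.mp e)
    have hA : ∀ q : ℕ, q.Prime → q ∣ orderOf g → q = 2 := by
      intro q hq hdvd
      by_contra hq2
      obtain ⟨k, hordk, hpow, hment⟩ := aux_step f g hg hfin q hq.pos hdvd
      have hmm : ∀ i j, ((k : Matrix (Fin n) (Fin n) R) - 1) i j ∈ IsLocalRing.maximalIdeal R :=
        fun i j => (hker f) ▸ hment i j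
      have hmat := eng_unit _ q hq.one_lt.le (hunit q hq hq2) hpow hmm
      have hk1 := gl_eq_one_of_coe k hmat
      rw [hk1, orderOf_one] at hordk
      exact hq.one_lt.ne hordk
    have hB : ¬ (4 ∣ orderOf g) := by
      intro h4
      obtain ⟨k, hordk, hpow, hment⟩ := aux_step f g hg hfin 4 (by norm_num) h4
      have hmm : ∀ i j, ((k : Matrix (Fin n) (Fin n) R) - 1) i j ∈ Ideal.span {(2 : R)} :=
        fun i j => hmax2 ▸ ((hker f) ▸ hment i j)
      obtain ⟨x, hx⟩ : ∃ x : Matrix (Fin n) (Fin n) R, x = (k : Matrix (Fin n) (Fin n) R) :=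
        ⟨_, rfl⟩
      rw [← hx] at hmm hpow
      have hid : x ^ 2 - 1 = (x - 1) * (x - 1) + ((x - 1) + (x - 1)) := by
        rw [pow_two]; simp only [sub_mul, mul_sub, mul_one, one_mul]; abel
      have hsq : ∀ i j, ((x ^ 2 - 1 : Matrix (Fin n) (Fin n) R)) i j ∈
          Ideal.span {(2 : R)} * Ideal.span {(2 : R)} := by
        intro i j
        have hij := congrFun (congrFun hid i) j
        rw [Matrix.add_apply, Matrix.add_apply, Matrix.mul_apply] at hij
        rw [hij]
        refine add_mem (Ideal.sum_mem _ fun l _ => Ideal.mul_mem_mul (hmm i l) (hmm l j)) ?_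
        have : (x - 1) i j + (x - 1) i j = 2 * ((x - 1) i j) := (two_mul _).symm
        rw [this]
        exact Ideal.mul_mem_mul (Ideal.mem_span_singleton_self _) (hmm i j)
      have hpow2 : (x ^ 2) ^ 2 = 1 := by
        rw [← pow_mul]
        exact_mod_cast hpow
      have hsq1 : x ^ 2 = 1 := eng_two hmax2 h20 _ hpow2 hsq
      have hk2 : k ^ 2 = 1 := by
        apply gl_eq_one_of_coe
        rw [Units.val_pow_eq_pow_val, ← hx]
        exact hsq1
      have hdvd2 : orderOf k ∣ 2 := orderOf_dvd_of_pow_eq_one hk2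
      rw [hordk] at hdvd2
      norm_num at hdvd2
    have h2N : 2 ∣ orderOf g := by
      have hfe := hA (orderOf g).minFac (Nat.minFac_prime hN1) (Nat.minFac_dvd _)
      have hd := Nat.minFac_dvd (orderOf g)
      rwa [hfe] at hd
    obtain ⟨c, hc⟩ := h2N
    have hc1 : c = 1 := by
      by_contra hc1
      have hc0 : c ≠ 0 := by rintro rfl; rw [mul_zero] at hc; exact hN0 hc
      have hr : c.minFac.Prime := Nat.minFac_prime hc1
      have hdc : c.minFac ∣ orderOf g := by
        have := (Nat.minFac_dvd c).mul_left 2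
        rwa [← hc] at this
      have hr2 : c.minFac = 2 := hA _ hr hdc
      have hd2 : 2 ∣ c := by
        have := Nat.minFac_dvd c
        rwa [hr2] at this
      obtain ⟨d, hd⟩ := hd2
      exact hB ⟨d, by rw [hc, hd]; ring⟩
    rw [hc, hc1, mul_one]
  · -- p = 2, reduction mod 4 : torsion-free
    intro hp2 f g hg hfin
    subst hp2
    have hc2 : ((2 : ℕ) : R) = (2 : R) := by norm_cast
    have hmax2 : IsLocalRing.maximalIdeal R = Ideal.span {(2 : R)} := by rw [hmax, hc2]
    have h20 : (2 : R) ≠ 0 := hc2 ▸ hp0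
    haveI : Nontrivial (ZMod 4) := ⟨0, 1, by decide⟩
    have hkm4 : RingHom.ker f ≤ IsLocalRing.maximalIdeal R :=
      IsLocalRing.le_maximalIdeal (RingHom.ker_ne_top f)
    have hker4 : RingHom.ker f ≤ Ideal.span {(2 : R)} * Ideal.span {(2 : R)} := by
      intro x hx
      have hxm : x ∈ Ideal.span {(2 : R)} := hmax2 ▸ hkm4 hx
      obtain ⟨y, hy⟩ := Ideal.mem_span_singleton'.mp hxm
      have hf2 : f (2 : R) = (2 : ZMod 4) := by
        rw [← hc2, map_natCast]
        norm_cast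
      have hfy : (2 : ZMod 4) * f y = 0 := by
        have hx0 : f x = 0 := hx
        rw [← hy, map_mul, hf2, mul_comm] at hx0
        exact hx0
      have hym : y ∈ IsLocalRing.maximalIdeal R := by
        by_contra hyu
        have hyun : IsUnit y := by
          by_contra hyn
          exact hyu ((IsLocalRing.mem_maximalIdeal y).mpr hyn)
        obtain ⟨u, hu⟩ := hyun.map f
        have h2z : (2 : ZMod 4) = 0 := by
          calc (2 : ZMod 4) = 2 * ((u : ZMod 4) * ((u⁻¹ : (ZMod 4)ˣ) : ZMod 4)) := by
                rw [Units.mul_inv, mul_one]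
            _ = (2 * f y) * ((u⁻¹ : (ZMod 4)ˣ) : ZMod 4) := by rw [hu, mul_assoc]
            _ = 0 := by rw [hfy, zero_mul]
        exact (by decide : (2 : ZMod 4) ≠ 0) h2z
      rw [← hy]
      exact Ideal.mul_mem_mul (hmax2 ▸ hym) (Ideal.mem_span_singleton_self _)
    by_contra hg1
    have hN1 : orderOf g ≠ 1 := fun e => hg1 (orderOf_eq_one_iff.mp e)
    have hq : (orderOf g).minFac.Prime := Nat.minFac_prime hN1
    obtain ⟨k, hordk, hpow, hment⟩ :=
      aux_step f g hg hfin (orderOf g).minFac hq.pos (Nat.minFac_dvd _)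
    have hmat : (k : Matrix (Fin n) (Fin n) R) = 1 := by
      rcases eq_or_ne (orderOf g).minFac 2 with hq2 | hq2
      · rw [hq2] at hpow
        exact eng_two hmax2 h20 _ hpow (fun i j => hker4 (hment i j))
      · exact eng_unit _ _ hq.one_lt.le (hunit _ hq hq2) hpow
          (fun i j => hkm4 (hment i j))
    have hk1 := gl_eq_one_of_coe k hmat
    rw [hk1, orderOf_one] at hordk
    exact hq.one_lt.ne hordk
end

section
/- Let G be a finite group, k a field, θ an automorphism of k with θ² = id, and V a finite-dimensional irreducible k[G]-module such that the dual module V* is isomorphic to the θ-twist V^θ. If char k ≠ 2, then G preserves a non-singular form β on V that is either hermitian or skew-hermitian with respect to θ. -/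
/-- A nonzero invariant sesquilinear form on an irreducible module has
trivial radical. -/
lemma aux_radical_triv {k V G : Type} [Field k] [AddCommGroup V] [Module k V]
    [Group G] (ρ : Representation k G V)
    (hirr : ∀ W : Submodule k V, (∀ g : G, ∀ v ∈ W, ρ g v ∈ W) → W = ⊥ ∨ W = ⊤)
    (β : V → V → k)
    (hadd : ∀ v v' w, β (v + v') w = β v w + β v' w)
    (hsmul : ∀ (a : k) (v w : V), β (a • v) w = a * β v w)
    (hinv : ∀ (g : G) (v w : V), β (ρ g v) (ρ g w) = β v w)
    (hne : ∃ v w, β v w ≠ 0) :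
    ∀ v, (∀ w, β v w = 0) → v = 0 := by
  have ρinv : ∀ (g : G) (v : V), ρ g (ρ g⁻¹ v) = v := by
    intro g v
    have h : ρ g * ρ g⁻¹ = 1 := by rw [← map_mul, mul_inv_cancel, map_one]
    calc ρ g (ρ g⁻¹ v) = (ρ g * ρ g⁻¹) v := rfl
      _ = v := by rw [h]; rfl
  have hzero : ∀ w, β 0 w = 0 := by
    intro w
    have := hsmul 0 0 w
    simpa using this
  set W : Submodule k V :=
    { carrier := {v | ∀ w, β v w = 0}
      add_mem' := by
        intro a b ha hb w
        rw [hadd, ha, hb, add_zero]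
      zero_mem' := hzero
      smul_mem' := by
        intro a v hv w
        rw [hsmul, hv, mul_zero] } with hW
  have hWinv : ∀ g : G, ∀ v ∈ W, ρ g v ∈ W := by
    intro g v hv w
    have : β (ρ g v) (ρ g (ρ g⁻¹ w)) = β v (ρ g⁻¹ w) := hinv g v (ρ g⁻¹ w)
    rw [ρinv] at this
    rw [this, hv]
  rcases hirr W hWinv with h | h
  · intro v hv
    have : v ∈ W := hv
    rw [h] at this
    simpa using this
  · exfalso
    obtain ⟨v, w, hvw⟩ := hne
    have : v ∈ W := by rw [h]; trivial
    exact hvw (this w)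

/-- Let G be a finite group, k a field of characteristic ≠ 2, θ a ring
automorphism of k with θ² = id, and V a finite-dimensional irreducible
k[G]-module whose dual V* is isomorphic (as a k[G]-module, θ-semilinearly)
to the twist V^θ — i.e. there is a bijective additive θ-semilinear
G-equivariant map e : V → V*.  Then G preserves a non-singular form β on V
that is hermitian or skew-hermitian with respect to θ. -/
theorem exists_invariant_hermitian_or_skew_form
    (G : Type) [Group G] [Finite G] (k : Type) [Field k]
    (hchar : ringChar k ≠ 2) (θ : k →+* k) (hθ : ∀ a, θ (θ a) = a)
    (V : Type) [AddCommGroup V] [Module k V] [FiniteDimensional k V]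
    [Nontrivial V] (ρ : Representation k G V)
    (hirr : ∀ W : Submodule k V, (∀ g : G, ∀ v ∈ W, ρ g v ∈ W) → W = ⊥ ∨ W = ⊤)
    (e : V → Module.Dual k V)
    (he_add : ∀ v w, e (v + w) = e v + e w)
    (he_smul : ∀ (a : k) (v : V), e (a • v) = θ a • e v)
    (he_bij : Function.Bijective e)
    (he_equiv : ∀ (g : G) (v : V), e (ρ g v) = (e v).comp (ρ g⁻¹)) :
    ∃ β : V → V → k,
      (∀ v w w', β v (w + w') = β v w + β v w') ∧
      (∀ v v' w, β (v + v') w = β v w + β v' w) ∧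
      (∀ (a : k) (v w : V), β (a • v) w = a * β v w) ∧
      (∀ (a : k) (v w : V), β v (a • w) = θ a * β v w) ∧
      (∀ (g : G) (v w : V), β (ρ g v) (ρ g w) = β v w) ∧
      (∀ v, (∀ w, β v w = 0) → v = 0) ∧
      ((∀ v w, β w v = θ (β v w)) ∨ (∀ v w, β w v = -θ (β v w))) := by
  classical
  have two_ne : (2 : k) ≠ 0 := Ring.two_ne_zero hchar
  -- base form
  set B : V → V → k := fun v w => e w v with hBdef
  have ρinv : ∀ (g : G) (v : V), ρ g⁻¹ (ρ g v) = v := by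
    intro g v
    have h : ρ g⁻¹ * ρ g = 1 := by rw [← map_mul, inv_mul_cancel, map_one]
    calc ρ g⁻¹ (ρ g v) = (ρ g⁻¹ * ρ g) v := rfl
      _ = v := by rw [h]; rfl
  have hB1 : ∀ v w w', B v (w + w') = B v w + B v w' := by
    intro v w w'
    simp only [hBdef, he_add, LinearMap.add_apply]
  have hB2 : ∀ v v' w, B (v + v') w = B v w + B v' w := by
    intro v v' w
    simp only [hBdef, map_add]
  have hB3 : ∀ (a : k) (v w : V), B (a • v) w = a * B v w := by
    intro a v w
    simp only [hBdef, map_smul, smul_eq_mul]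
  have hB4 : ∀ (a : k) (v w : V), B v (a • w) = θ a * B v w := by
    intro a v w
    simp only [hBdef, he_smul, LinearMap.smul_apply, smul_eq_mul]
  have hB5 : ∀ (g : G) (v w : V), B (ρ g v) (ρ g w) = B v w := by
    intro g v w
    simp only [hBdef, he_equiv, LinearMap.comp_apply, ρinv]
  have hBne : ∃ v w, B v w ≠ 0 := by
    obtain ⟨v, hv⟩ := exists_ne (0 : V)
    obtain ⟨φ, hφ⟩ : ∃ φ : Module.Dual k V, φ v ≠ 0 := by
      by_contra h
      push_neg at h
      exact hv ((Module.forall_dual_apply_eq_zero_iff k v).mp h)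
    obtain ⟨w, rfl⟩ := he_bij.2 φ
    exact ⟨v, w, hφ⟩
  -- symmetrized and antisymmetrized forms
  set Bp : V → V → k := fun v w => B v w + θ (B w v) with hBp
  set Bm : V → V → k := fun v w => B v w - θ (B w v) with hBm
  by_cases hne : ∃ v w, Bp v w ≠ 0
  · refine ⟨Bp, ?_, ?_, ?_, ?_, ?_, ?_, Or.inl ?_⟩
    · intro v w w'; simp only [hBp, hB1, hB2, map_add]; ring
    · intro v v' w; simp only [hBp, hB1, hB2, map_add]; ring
    · intro a v w; simp only [hBp, hB3, hB4, map_mul, hθ]; ring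
    · intro a v w; simp only [hBp, hB3, hB4, map_mul, hθ]; ring
    · intro g v w; simp only [hBp, hB5]
    · exact aux_radical_triv ρ hirr Bp
        (by intro v v' w; simp only [hBp, hB1, hB2, map_add]; ring)
        (by intro a v w; simp only [hBp, hB3, hB4, map_mul, hθ]; ring)
        (by intro g v w; simp only [hBp, hB5]) hne
    · intro v w; simp only [hBp, map_add, hθ]; ring
  · push_neg at hne
    have hkey : ∀ v w, θ (B w v) = -B v w := by
      intro v w
      have := hne v w
      simp only [hBp] at this
      exact eq_neg_of_add_eq_zero_right this
    have hmne : ∃ v w, Bm v w ≠ 0 := by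
      obtain ⟨v, w, hvw⟩ := hBne
      refine ⟨v, w, ?_⟩
      simp only [hBm, hkey, sub_neg_eq_add]
      intro h
      rw [← two_mul] at h
      rcases mul_eq_zero.mp h with h' | h'
      · exact two_ne h'
      · exact hvw h'
    refine ⟨Bm, ?_, ?_, ?_, ?_, ?_, ?_, Or.inr ?_⟩
    · intro v w w'; simp only [hBm, hB1, hB2, map_add]; ring
    · intro v v' w; simp only [hBm, hB1, hB2, map_add]; ring
    · intro a v w; simp only [hBm, hB3, hB4, map_mul, hθ]; ring
    · intro a v w; simp only [hBm, hB3, hB4, map_mul, hθ]; ring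
    · intro g v w; simp only [hBm, hB5]
    · exact aux_radical_triv ρ hirr Bm
        (by intro v v' w; simp only [hBm, hB1, hB2, map_add]; ring)
        (by intro a v w; simp only [hBm, hB3, hB4, map_mul, hθ]; ring)
        (by intro g v w; simp only [hBm, hB5]) hmne
    · intro v w; simp only [hBm, map_sub, hθ]; ring
end
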